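/- arXiv:2403.05677 — 8 statements merged into one kernel-verified Lean document; each statement's English description precedes it below -/
import Mathlib

section
/- For all integers r ≥ 2, n ≥ 1, and every integer N with N > ((3r - 5 + sqrt(r^2 - 2r + 9))/2)·n, every r-coloring of the edges of the complete bipartite graph K_{N,N} contains a monochromatic copy of the double star S_{n,n}. (Equivalently, R^bip_r(S_{n,n}) ≤ ((3r-5+sqrt(r^2-2r+9))/2)n + 1.) -/
/-- A monochromatic copy of the double star `S_{k,l}` in an `r`-coloring `c` of the
edges of the complete bipartite graph `K_{N,N}` with parts `X = Fin N` (first argument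
of `c`) and `Y = Fin N` (second argument): centers `u ∈ X`, `v ∈ Y`, leaves `a i ∈ Y`
of `u` and `b j ∈ X` of `v`, with all edges of a common color. -/
def BipHasMonoDoubleStar (N r k l : ℕ) (c : Fin N → Fin N → Fin r) : Prop :=
  ∃ (u v : Fin N) (a : Fin k → Fin N) (b : Fin l → Fin N) (col : Fin r),
    Function.Injective a ∧ Function.Injective b ∧
    (∀ i, a i ≠ v) ∧ (∀ j, b j ≠ u) ∧
    c u v = col ∧ (∀ i, c u (a i) = col) ∧ (∀ j, c (b j) v = col)

open Finset

def dX {N r : ℕ} (c : Fin N → Fin N → Fin r) (x : Fin N) (j : Fin r) : ℕ :=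
  (univ.filter fun y => c x y = j).card

def tr {N r : ℕ} (c : Fin N → Fin N → Fin r) : Fin N → Fin N → Fin r := fun x y => c y x

abbrev ExX {N r : ℕ} (n : ℕ) (c : Fin N → Fin N → Fin r) (x : Fin N) (i : Fin r) : Prop :=
  ¬ dX c x i ≤ n ∧ ∀ j, j ≠ i → dX c x j ≤ n

def kX {N r : ℕ} (n : ℕ) (c : Fin N → Fin N → Fin r) (x : Fin N) : ℕ :=
  (univ.filter fun j => ¬ dX c x j ≤ n).card

noncomputable def A1 {N r : ℕ} (n : ℕ) (c : Fin N → Fin N → Fin r) (i : Fin r) : ℕ :=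
  (univ.filter fun x => ExX n c x i).card

lemma sum_dX {N r : ℕ} (c : Fin N → Fin N → Fin r) (x : Fin N) :
    ∑ j, dX c x j = N := by
  have := Finset.card_eq_sum_card_fiberwise
    (f := fun y => c x y) (s := (univ : Finset (Fin N))) (t := univ) (fun y _ => mem_univ _)
  simpa [dX, Finset.card_univ] using this.symm

lemma L1 {N r n : ℕ} (c : Fin N → Fin N → Fin r) (hrn : r * n < N) (x : Fin N) :
    1 ≤ kX n c x := by
  by_contra h
  push_neg at h
  have h0 : (univ.filter fun j => ¬ dX c x j ≤ n) = ∅ := by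
    apply card_eq_zero.mp; unfold kX at h; omega
  have hall : ∀ j : Fin r, dX c x j ≤ n := by
    intro j
    by_contra hj
    have : j ∈ (univ.filter fun j => ¬ dX c x j ≤ n) := mem_filter.mpr ⟨mem_univ _, hj⟩
    rw [h0] at this; exact absurd this (notMem_empty _)
  have : ∑ j, dX c x j ≤ ∑ _j : Fin r, n := Finset.sum_le_sum fun j _ => hall j
  rw [sum_dX c x] at this
  simp at this
  omega

lemma L2 {N r n : ℕ} (c : Fin N → Fin N → Fin r) (hrn : r * n < N) (x : Fin N) :
    2 ≤ kX n c x + ∑ i, if ExX n c x i then 1 else 0 := by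
  classical
  rcases le_or_gt 2 (kX n c x) with h | h
  · exact le_trans h (Nat.le_add_right _ _)
  · have h1 := L1 c hrn x
    have hk : kX n c x = 1 := by omega
    obtain ⟨i0, hi0⟩ := card_eq_one.mp hk
    have hbig : ¬ dX c x i0 ≤ n := by
      have : i0 ∈ univ.filter fun j => ¬ dX c x j ≤ n := by
        rw [hi0]; exact mem_singleton_self _
      exact (mem_filter.mp this).2
    have hex : ExX n c x i0 := by
      refine ⟨hbig, fun j hj => ?_⟩
      by_contra hjb
      have : j ∈ univ.filter fun j => ¬ dX c x j ≤ n := mem_filter.mpr ⟨mem_univ _, hjb⟩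
      rw [hi0] at this
      exact hj (mem_singleton.mp this)
    have hge : 1 ≤ ∑ i, if ExX n c x i then 1 else 0 := by
      have := Finset.single_le_sum (f := fun i => if ExX n c x i then (1:ℕ) else 0)
        (fun i _ => Nat.zero_le _) (mem_univ i0)
      simpa only [if_pos hex] using this
    omega

lemma L3 {N r n : ℕ} (c : Fin N → Fin N → Fin r) (x : Fin N) :
    (∑ y, if dX c x (c x y) ≤ n then 1 else 0) + n * kX n c x ≤ r * n := by
  classical
  have e1 : (∑ y, if dX c x (c x y) ≤ n then (1:ℕ) else 0)
      = (univ.filter fun y => dX c x (c x y) ≤ n).card := (Finset.card_filter _ _).symm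
  have e2 : (univ.filter fun y => dX c x (c x y) ≤ n).card
      = ∑ j ∈ univ.filter (fun j => dX c x j ≤ n), dX c x j := by
    rw [Finset.card_eq_sum_card_fiberwise
      (f := fun y => c x y) (t := univ.filter fun j => dX c x j ≤ n)
      (fun y hy => mem_filter.mpr ⟨mem_univ _, (mem_filter.mp hy).2⟩)]
    refine Finset.sum_congr rfl fun j hj => ?_
    have hj' : dX c x j ≤ n := (mem_filter.mp hj).2
    have hset : ((univ.filter fun y => dX c x (c x y) ≤ n).filter fun y => c x y = j)
        = univ.filter fun y => c x y = j := by
      rw [Finset.filter_filter]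
      ext y
      simp only [mem_filter, mem_univ, true_and]
      constructor
      · exact fun h => h.2
      · intro h; exact ⟨by rw [h]; exact hj', h⟩
    rw [hset]; rfl
  have e3 : ∑ j ∈ univ.filter (fun j => dX c x j ≤ n), dX c x j
      ≤ (univ.filter fun j => dX c x j ≤ n).card * n := by
    have := Finset.sum_le_card_nsmul (univ.filter fun j => dX c x j ≤ n) (dX c x) n
      (fun j hj => (mem_filter.mp hj).2)
    simpa using this
  have e4 : (univ.filter fun j => dX c x j ≤ n).card + kX n c x = r := by
    have := Finset.card_filter_add_card_filter_not
      (s := (univ : Finset (Fin r))) (p := fun j => dX c x j ≤ n)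
    simpa [kX, card_univ] using this
  have e5 : ((univ.filter fun j => dX c x j ≤ n).card + kX n c x) * n = r * n := by
    rw [e4]
  rw [e1, e2]
  calc (∑ j ∈ univ.filter (fun j => dX c x j ≤ n), dX c x j) + n * kX n c x
      ≤ (univ.filter fun j => dX c x j ≤ n).card * n + n * kX n c x :=
        Nat.add_le_add_right e3 _
    _ = ((univ.filter fun j => dX c x j ≤ n).card + kX n c x) * n := by ring
    _ = r * n := e5

lemma L4 {N r n : ℕ} (c : Fin N → Fin N → Fin r)
    (hsm : ∀ x y, dX c x (c x y) ≤ n ∨ dX (tr c) y (c x y) ≤ n) (i : Fin r) :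
    A1 n c i * N + n * A1 n (tr c) i ≤ n * N + A1 n c i * ((r-1) * n) := by
  classical
  set exf := univ.filter fun x : Fin N => ExX n c x i with hexf
  set bigf := univ.filter fun x : Fin N => ¬ dX c x i ≤ n with hbigf
  set bY := univ.filter fun y : Fin N => ¬ dX (tr c) y i ≤ n with hbY
  have h_sub : exf ⊆ bigf := fun x hx =>
    mem_filter.mpr ⟨mem_univ _, ((mem_filter.mp hx).2).1⟩
  have hA1 : A1 n c i = exf.card := rfl
  have h1 : A1 n c i * N ≤ (∑ x ∈ exf, dX c x i) + A1 n c i * ((r-1)*n) := by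
    have hx : ∀ x ∈ exf, N ≤ dX c x i + (r-1)*n := by
      intro x hx
      have hex : ExX n c x i := (mem_filter.mp hx).2
      have herase : ∑ j ∈ univ.erase i, dX c x j ≤ (r-1) * n := by
        have hb : ∀ j ∈ univ.erase i, dX c x j ≤ n :=
          fun j hj => hex.2 j (Finset.ne_of_mem_erase hj)
        have := Finset.sum_le_card_nsmul (univ.erase i) (dX c x) n hb
        simpa [Finset.card_erase_of_mem (mem_univ i), card_univ] using this
      have hsplit : dX c x i + ∑ j ∈ univ.erase i, dX c x j = N := by
        rw [Finset.add_sum_erase _ _ (mem_univ i)]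
        exact sum_dX c x
      omega
    calc A1 n c i * N = ∑ _x ∈ exf, N := by rw [Finset.sum_const, hA1, smul_eq_mul]
      _ ≤ ∑ x ∈ exf, (dX c x i + (r-1)*n) := Finset.sum_le_sum hx
      _ = (∑ x ∈ exf, dX c x i) + A1 n c i * ((r-1)*n) := by
          rw [Finset.sum_add_distrib, Finset.sum_const, hA1, smul_eq_mul]
  have h2 : ∑ x ∈ exf, dX c x i ≤ ∑ x ∈ bigf, dX c x i :=
    Finset.sum_le_sum_of_subset h_sub
  have h3 : (∑ x ∈ bigf, dX c x i) + n * bY.card ≤ n * N := by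
    have hE : ∑ x ∈ bigf, dX c x i = ∑ y, ∑ x ∈ bigf, if c x y = i then 1 else 0 := by
      rw [Finset.sum_comm]
      exact Finset.sum_congr rfl fun x _ => Finset.card_filter _ _
    have hpt : ∀ y : Fin N,
        (∑ x ∈ bigf, if c x y = i then (1:ℕ) else 0)
          + (if ¬ dX (tr c) y i ≤ n then n else 0) ≤ n := by
      intro y
      by_cases hby : dX (tr c) y i ≤ n
      · rw [if_neg (by simpa using hby)]
        have : (∑ x ∈ bigf, if c x y = i then (1:ℕ) else 0)
            ≤ ∑ x, if c x y = i then (1:ℕ) else 0 :=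
          Finset.sum_le_sum_of_subset (Finset.filter_subset _ _)
        have h2' : (∑ x, if c x y = i then (1:ℕ) else 0) = dX (tr c) y i :=
          (Finset.card_filter _ _).symm
        omega
      · rw [if_pos hby]
        have hz : (∑ x ∈ bigf, if c x y = i then (1:ℕ) else 0) = 0 := by
          apply Finset.sum_eq_zero
          intro x hx
          have hbx : ¬ dX c x i ≤ n := (mem_filter.mp hx).2
          have hc : c x y ≠ i := by
            intro hc
            rcases hsm x y with h | h
            · rw [hc] at h; exact hbx h
            · rw [hc] at h; exact hby h
          rw [if_neg hc]
        omega
    have hsum := Finset.sum_le_sum (fun y (_ : y ∈ (univ : Finset (Fin N))) => hpt y)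
    rw [Finset.sum_add_distrib] at hsum
    have hb' : (∑ y, if ¬ dX (tr c) y i ≤ n then n else 0) = n * bY.card := by
      rw [← Finset.sum_filter, Finset.sum_const, smul_eq_mul, hbY, mul_comm]
    have hn' : (∑ _y : Fin N, n) = n * N := by
      rw [Finset.sum_const, card_univ, Fintype.card_fin, smul_eq_mul, mul_comm]
    rw [hb', hn', ← hE] at hsum
    exact hsum
  have h4 : A1 n (tr c) i ≤ bY.card := by
    apply Finset.card_le_card
    intro y hy
    exact mem_filter.mpr ⟨mem_univ _, ((mem_filter.mp hy).2).1⟩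
  have h4n : n * A1 n (tr c) i ≤ n * bY.card := Nat.mul_le_mul_left n h4
  calc A1 n c i * N + n * A1 n (tr c) i
      ≤ ((∑ x ∈ exf, dX c x i) + A1 n c i * ((r-1)*n)) + n * bY.card :=
        Nat.add_le_add h1 h4n
    _ = ((∑ x ∈ exf, dX c x i) + n * bY.card) + A1 n c i * ((r-1)*n) := by ring
    _ ≤ ((∑ x ∈ bigf, dX c x i) + n * bY.card) + A1 n c i * ((r-1)*n) := by
        exact Nat.add_le_add_right (Nat.add_le_add_right h2 _) _
    _ ≤ n * N + A1 n c i * ((r-1)*n) := Nat.add_le_add_right h3 _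

lemma L5 {N r n : ℕ} (c : Fin N → Fin N → Fin r)
    (hsm : ∀ x y, dX c x (c x y) ≤ n ∨ dX (tr c) y (c x y) ≤ n) (x y : Fin N) :
    1 + ∑ i, (if ExX n c x i then (1:ℕ) else 0) * (if ExX n (tr c) y i then 1 else 0)
      ≤ (if dX c x (c x y) ≤ n then 1 else 0)
        + (if dX (tr c) y (c x y) ≤ n then 1 else 0) := by
  classical
  have hprod : ∀ i' : Fin r,
      (if ExX n c x i' then (1:ℕ) else 0) * (if ExX n (tr c) y i' then 1 else 0)
        = if (ExX n c x i' ∧ ExX n (tr c) y i') then 1 else 0 := by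
    intro i'
    by_cases h1 : ExX n c x i'
    · by_cases h2 : ExX n (tr c) y i'
      · rw [if_pos h1, if_pos h2, if_pos ⟨h1, h2⟩, one_mul]
      · rw [if_pos h1, if_neg h2, one_mul,
          if_neg (fun h : ExX n c x i' ∧ ExX n (tr c) y i' => h2 h.2)]
    · rw [if_neg h1, zero_mul,
        if_neg (fun h : ExX n c x i' ∧ ExX n (tr c) y i' => h1 h.1)]
  by_cases hex : ∃ i, ExX n c x i ∧ ExX n (tr c) y i
  · obtain ⟨i, hxi, hyi⟩ := hex
    have hne : c x y ≠ i := by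
      intro h
      rcases hsm x y with h1 | h1
      · rw [h] at h1; exact hxi.1 h1
      · rw [h] at h1; exact hyi.1 h1
    have hf1 : (if dX c x (c x y) ≤ n then (1:ℕ) else 0) = 1 := if_pos (hxi.2 _ hne)
    have hf2 : (if dX (tr c) y (c x y) ≤ n then (1:ℕ) else 0) = 1 := if_pos (hyi.2 _ hne)
    have hsumle : (∑ i', (if ExX n c x i' then (1:ℕ) else 0) * (if ExX n (tr c) y i' then 1 else 0)) ≤ 1 := by
      rw [Finset.sum_congr rfl fun i' _ => hprod i']
      rw [← Finset.card_filter]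
      apply Finset.card_le_one.mpr
      intro a ha b hb
      have ha' := (mem_filter.mp ha).2
      have hb' := (mem_filter.mp hb).2
      by_contra hne'
      exact ha'.1.1 (hb'.1.2 a hne')
    omega
  · have hz : (∑ i', (if ExX n c x i' then (1:ℕ) else 0) * (if ExX n (tr c) y i' then 1 else 0)) = 0 := by
      apply Finset.sum_eq_zero
      intro i' _
      by_cases h1 : ExX n c x i'
      · by_cases h2 : ExX n (tr c) y i'
        · exact absurd ⟨i', h1, h2⟩ hex
        · simp [h2]
      · simp [h1]
    rcases hsm x y with h | h
    · have : (if dX c x (c x y) ≤ n then (1:ℕ) else 0) = 1 := if_pos h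
      omega
    · have : (if dX (tr c) y (c x y) ≤ n then (1:ℕ) else 0) = 1 := if_pos h
      omega

lemma percolor (m x R a b : ℝ) (hm : 0 ≤ m) (ha : 0 ≤ a) (hb : 0 ≤ b)
    (hP : 0 ≤ x - (R-1)*m) (hRm : 0 ≤ (R-1)*m)
    (h1 : a*x + m*b ≤ m*x + a*((R-1)*m))
    (h2 : b*x + m*a ≤ m*x + b*((R-1)*m)) :
    m*(a+b)*(x-(R-1)*m) ≤ m^2*x + a*b*(x-(R-1)*m) := by
  rcases le_or_gt m a with h | h
  · nlinarith [mul_nonneg (mul_nonneg hb hP) (sub_nonneg.2 h),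
      mul_le_mul_of_nonneg_left h1 hm, mul_nonneg (mul_nonneg hm hm) hb]
  · rcases le_or_gt m b with h' | h'
    · nlinarith [mul_nonneg (mul_nonneg ha hP) (sub_nonneg.2 h'),
        mul_le_mul_of_nonneg_left h2 hm, mul_nonneg (mul_nonneg hm hm) ha]
    · nlinarith [mul_nonneg (mul_nonneg (sub_nonneg.2 h.le) (sub_nonneg.2 h'.le)) hP,
        mul_nonneg (mul_nonneg hm hm) hRm]


lemma leaves_of_card {N n : ℕ} (s : Finset (Fin N)) (h : n ≤ s.card) :
    ∃ a : Fin n → Fin N, Function.Injective a ∧ ∀ i, a i ∈ s := by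
  obtain ⟨t, hts, htc⟩ := Finset.exists_subset_card_eq h
  let e := t.equivFinOfCardEq htc
  exact ⟨fun i => (e.symm i : Fin N), fun i j hij => by
    apply e.symm.injective; exact Subtype.ext hij,
    fun i => hts (e.symm i).2⟩

lemma star_of_bigbig {N r n : ℕ} (c : Fin N → Fin N → Fin r) (x y : Fin N)
    (hx : n + 1 ≤ dX c x (c x y)) (hy : n + 1 ≤ dX (tr c) y (c x y)) :
    BipHasMonoDoubleStar N r n n c := by
  classical
  set col := c x y with hcol
  have hyA : y ∈ univ.filter fun y' => c x y' = col := by simp [hcol]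
  have hxB : x ∈ univ.filter fun x' => c x' y = col := by simp [hcol]
  have hA : n ≤ ((univ.filter fun y' => c x y' = col).erase y).card := by
    rw [Finset.card_erase_of_mem hyA]
    have : n + 1 ≤ (univ.filter fun y' => c x y' = col).card := hx
    omega
  have hB : n ≤ ((univ.filter fun x' => c x' y = col).erase x).card := by
    rw [Finset.card_erase_of_mem hxB]
    have : n + 1 ≤ (univ.filter fun x' => c x' y = col).card := hy
    omega
  obtain ⟨a, ha, hamem⟩ := leaves_of_card _ hA
  obtain ⟨b, hb, hbmem⟩ := leaves_of_card _ hB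
  refine ⟨x, y, a, b, col, ha, hb, ?_, ?_, hcol.symm, ?_, ?_⟩
  · intro i; exact Finset.ne_of_mem_erase (hamem i)
  · intro j; exact Finset.ne_of_mem_erase (hbmem j)
  · intro i; have := Finset.mem_of_mem_erase (hamem i); simpa using this
  · intro j; have := Finset.mem_of_mem_erase (hbmem j); simpa using this

lemma final_contra (R m x P SA SB SAB KX KY PX PY s : ℝ)
    (hR : 2 ≤ R) (hm : 1 ≤ m)
    (hs2 : s^2 = R^2 - 2*R + 9) (hs3 : 3 ≤ s) (hsR : R - 1 ≤ s) (hsnn : 0 ≤ s)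
    (hNs : (3*R - 5 + s)/2 * m < x)
    (hP : P = x - (R-1)*m)
    (hA : x*x + SAB ≤ PX + PY)
    (hSX : PX + m*KX ≤ x*(R*m))
    (hSY : PY + m*KY ≤ x*(R*m))
    (hCX : x*2 ≤ KX + SA)
    (hCY : x*2 ≤ KY + SB)
    (hsum2 : m*(SA+SB)*P ≤ R*(m^2*x) + SAB*P) : False := by
  subst hP
  have hm0 : (0:ℝ) ≤ m := by linarith
  have h1 : ((R-1)*2)*m ≤ (3*R - 5 + s)*m := mul_le_mul_of_nonneg_right (by linarith) hm0
  have hxP : (R-1)*m < x := by linarith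
  have h1' : ((2*R-4)*2)*m ≤ (3*R - 5 + s)*m := mul_le_mul_of_nonneg_right (by linarith) hm0
  have hx24 : (2*R-4)*m < x := by linarith
  have h1'' : (R*2)*m ≤ (3*R - 5 + s)*m := mul_le_mul_of_nonneg_right (by linarith) hm0
  have hxR : R*m < x := by linarith
  have hx0 : (0:ℝ) < x := by
    have h2m : 2*m ≤ R*m := mul_le_mul_of_nonneg_right hR hm0
    linarith
  have hPpos : (0:ℝ) < x - (R-1)*m := by linarith
  have hG2 : x*x + SAB + 4*m*x - 2*R*m*x - m*SA - m*SB ≤ 0 := by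
    have hCXm := mul_le_mul_of_nonneg_left hCX hm0
    have hCYm := mul_le_mul_of_nonneg_left hCY hm0
    linarith
  have step1 : (x*x + SAB + 4*m*x - 2*R*m*x) * (x-(R-1)*m)
      ≤ (m*(SA+SB)) * (x-(R-1)*m) :=
    mul_le_mul_of_nonneg_right (by linarith) hPpos.le
  have step3 : (x*x + 4*m*x - 2*R*m*x) * (x-(R-1)*m) ≤ R*(m^2*x) := by
    have hexp : (x*x + SAB + 4*m*x - 2*R*m*x) * (x-(R-1)*m)
        = (x*x + 4*m*x - 2*R*m*x) * (x-(R-1)*m) + SAB*(x-(R-1)*m) := by ring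
    linarith [step1, hsum2, hexp]
  have hgt : s * m < 2*x - (3*R-5)*m := by linarith
  have hsq : (s*m)^2 < (2*x - (3*R-5)*m)^2 := by
    have h := mul_self_lt_mul_self (mul_nonneg hsnn hm0) hgt
    calc (s*m)^2 = (s*m)*(s*m) := by ring
      _ < (2*x - (3*R-5)*m)*(2*x - (3*R-5)*m) := h
      _ = (2*x - (3*R-5)*m)^2 := by ring
  have hs2m : s^2 * m^2 = (R^2-2*R+9)*m^2 := by rw [hs2]
  have hquad : R*m^2 < (x-(R-1)*m)*(x-(2*R-4)*m) := by
    have hiden : (x-(R-1)*m)*(x-(2*R-4)*m) - R*m^2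
        = ((2*x - (3*R-5)*m)^2 - (R^2-2*R+9)*m^2)/4 := by ring
    have hsq' : s^2*m^2 < (2*x - (3*R-5)*m)^2 := by
      have : (s*m)^2 = s^2*m^2 := by ring
      linarith [hsq]
    linarith [hsq', hs2m, hiden]
  have step4 : R*(m^2*x) < (x-(R-1)*m)*(x-(2*R-4)*m)*x := by
    have h := mul_lt_mul_of_pos_right hquad hx0
    linarith [h]
  have hfin : (x*x + 4*m*x - 2*R*m*x) * (x-(R-1)*m)
      = (x-(R-1)*m)*(x-(2*R-4)*m)*x := by ring
  linarith [step3, step4, hfin]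

set_option maxHeartbeats 1000000 in
/-- `R^bip_r(S_{n,n}) ≤ ((3r-5+√(r²-2r+9))/2)·n + 1`. -/
theorem stmt1 (r n N : ℕ) (hr : 2 ≤ r) (hn : 1 ≤ n)
    (hN : ((3*(r:ℝ) - 5 + Real.sqrt ((r:ℝ)^2 - 2*r + 9))/2) * n < (N : ℝ))
    (c : Fin N → Fin N → Fin r) :
    BipHasMonoDoubleStar N r n n c := by
  classical
  by_contra hno
  have hsm : ∀ x y, dX c x (c x y) ≤ n ∨ dX (tr c) y (c x y) ≤ n := by
    intro x y
    by_contra h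
    push_neg at h
    obtain ⟨h1, h2⟩ := h
    exact hno (star_of_bigbig c x y (by omega) (by omega))
  have hsm' : ∀ x y, dX (tr c) x (tr c x y) ≤ n ∨ dX (tr (tr c)) y (tr c x y) ≤ n := by
    intro x y
    rcases hsm y x with h | h
    · right; exact h
    · left; exact h
  -- real preliminaries
  have hRr : (2:ℝ) ≤ (r:ℝ) := by exact_mod_cast hr
  have hnr : (1:ℝ) ≤ (n:ℝ) := by exact_mod_cast hn
  have hm0 : (0:ℝ) ≤ (n:ℝ) := by linarith
  have hs0 : (0:ℝ) ≤ (r:ℝ)^2 - 2*(r:ℝ) + 9 := by nlinarith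
  have hs2 : Real.sqrt ((r:ℝ)^2 - 2*(r:ℝ) + 9) ^ 2 = (r:ℝ)^2 - 2*(r:ℝ) + 9 :=
    Real.sq_sqrt hs0
  have hsnn : (0:ℝ) ≤ Real.sqrt ((r:ℝ)^2 - 2*(r:ℝ) + 9) := Real.sqrt_nonneg _
  have hs3 : (3:ℝ) ≤ Real.sqrt ((r:ℝ)^2 - 2*(r:ℝ) + 9) := by
    have h9 : (3:ℝ)^2 ≤ (r:ℝ)^2 - 2*(r:ℝ) + 9 := by nlinarith
    calc (3:ℝ) = Real.sqrt (3^2) := by rw [Real.sqrt_sq (by norm_num : (0:ℝ) ≤ 3)]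
      _ ≤ _ := Real.sqrt_le_sqrt h9
  have hsR : (r:ℝ) - 1 ≤ Real.sqrt ((r:ℝ)^2 - 2*(r:ℝ) + 9) := by
    have h1 : ((r:ℝ)-1)^2 ≤ (r:ℝ)^2 - 2*(r:ℝ) + 9 := by nlinarith
    calc (r:ℝ)-1 = Real.sqrt (((r:ℝ)-1)^2) := (Real.sqrt_sq (by linarith)).symm
      _ ≤ _ := Real.sqrt_le_sqrt h1
  have hxP : ((r:ℝ)-1) * n < (N:ℝ) := by
    have h1 : (((r:ℝ)-1)*2) * n ≤ (3*(r:ℝ) - 5 + Real.sqrt ((r:ℝ)^2 - 2*(r:ℝ) + 9)) * n :=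
      mul_le_mul_of_nonneg_right (by linarith) hm0
    linarith
  have hx24 : (2*(r:ℝ)-4) * n < (N:ℝ) := by
    have h1 : ((2*(r:ℝ)-4)*2) * n ≤ (3*(r:ℝ) - 5 + Real.sqrt ((r:ℝ)^2 - 2*(r:ℝ) + 9)) * n :=
      mul_le_mul_of_nonneg_right (by linarith [hsR]) hm0
    linarith
  have hxR : (r:ℝ) * n < (N:ℝ) := by
    have h1 : ((r:ℝ)*2) * n ≤ (3*(r:ℝ) - 5 + Real.sqrt ((r:ℝ)^2 - 2*(r:ℝ) + 9)) * n :=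
      mul_le_mul_of_nonneg_right (by linarith) hm0
    linarith
  have hrnN : r * n < N := by
    have h : ((r * n : ℕ) : ℝ) < ((N : ℕ) : ℝ) := by push_cast; linarith [hxR]
    exact_mod_cast h
  -- global pointwise count
  have hfact : (∑ x : Fin N, ∑ y : Fin N, ∑ i,
        (if ExX n c x i then (1:ℕ) else 0) * (if ExX n (tr c) y i then 1 else 0))
      = ∑ i, A1 n c i * A1 n (tr c) i := by
    have h1 : ∀ x : Fin N, (∑ y : Fin N, ∑ i,
          (if ExX n c x i then (1:ℕ) else 0) * (if ExX n (tr c) y i then 1 else 0))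
        = ∑ i, (if ExX n c x i then (1:ℕ) else 0)
            * ∑ y, (if ExX n (tr c) y i then (1:ℕ) else 0) := by
      intro x
      rw [Finset.sum_comm]
      exact Finset.sum_congr rfl fun i _ => (Finset.mul_sum _ _ _).symm
    rw [Finset.sum_congr rfl fun x _ => h1 x, Finset.sum_comm]
    refine Finset.sum_congr rfl fun i _ => ?_
    rw [← Finset.sum_mul]
    congr 1
    · exact (Finset.card_filter _ _).symm
    · exact (Finset.card_filter _ _).symm
  have hone : (∑ _x : Fin N, ∑ _y : Fin N, (1:ℕ)) = N * N := by
    simp [Finset.card_univ]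
  have hA : N*N + (∑ i, A1 n c i * A1 n (tr c) i)
      ≤ (∑ x : Fin N, ∑ y : Fin N, if dX c x (c x y) ≤ n then 1 else 0)
        + (∑ x : Fin N, ∑ y : Fin N, if dX (tr c) y (c x y) ≤ n then 1 else 0) := by
    calc N*N + (∑ i, A1 n c i * A1 n (tr c) i)
        = ∑ x : Fin N, ∑ y : Fin N,
            (1 + ∑ i, (if ExX n c x i then (1:ℕ) else 0)
              * (if ExX n (tr c) y i then 1 else 0)) := by
          simp only [Finset.sum_add_distrib]
          rw [hone, hfact]
      _ ≤ ∑ x : Fin N, ∑ y : Fin N,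
            ((if dX c x (c x y) ≤ n then (1:ℕ) else 0)
              + (if dX (tr c) y (c x y) ≤ n then 1 else 0)) :=
          Finset.sum_le_sum fun x _ => Finset.sum_le_sum fun y _ => L5 c hsm x y
      _ = _ := by simp only [Finset.sum_add_distrib]
  have hSX : (∑ x : Fin N, ∑ y : Fin N, if dX c x (c x y) ≤ n then (1:ℕ) else 0)
      + n * (∑ x, kX n c x) ≤ N * (r*n) := by
    have h := Finset.sum_le_sum fun (x : Fin N) (_ : x ∈ univ) => L3 (n := n) c x
    rw [Finset.sum_add_distrib] at h
    have h2 : (∑ x : Fin N, n * kX n c x) = n * ∑ x, kX n c x := (Finset.mul_sum _ _ _).symm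
    have h3 : (∑ _x : Fin N, r*n) = N*(r*n) := by
      simp [Finset.sum_const, Finset.card_univ, mul_comm]
    rw [h2, h3] at h
    exact h
  have hSYpre : (∑ y : Fin N, ∑ x : Fin N, if dX (tr c) y (tr c y x) ≤ n then (1:ℕ) else 0)
      + n * (∑ y, kX n (tr c) y) ≤ N * (r*n) := by
    have h := Finset.sum_le_sum fun (y : Fin N) (_ : y ∈ univ) => L3 (n := n) (tr c) y
    rw [Finset.sum_add_distrib] at h
    have h2 : (∑ y : Fin N, n * kX n (tr c) y) = n * ∑ y, kX n (tr c) y :=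
      (Finset.mul_sum _ _ _).symm
    have h3 : (∑ _y : Fin N, r*n) = N*(r*n) := by
      simp [Finset.sum_const, Finset.card_univ, mul_comm]
    rw [h2, h3] at h
    exact h
  have hSY : (∑ x : Fin N, ∑ y : Fin N, if dX (tr c) y (c x y) ≤ n then (1:ℕ) else 0)
      + n * (∑ y, kX n (tr c) y) ≤ N * (r*n) := by
    have hswap : (∑ x : Fin N, ∑ y : Fin N, if dX (tr c) y (c x y) ≤ n then (1:ℕ) else 0)
        = ∑ y : Fin N, ∑ x : Fin N, if dX (tr c) y (tr c y x) ≤ n then (1:ℕ) else 0 := by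
      rw [Finset.sum_comm]
      exact Finset.sum_congr rfl fun y _ => Finset.sum_congr rfl fun x _ => rfl
    rw [hswap]
    exact hSYpre
  have hCX : N*2 ≤ (∑ x, kX n c x) + ∑ i, A1 n c i := by
    have h := Finset.sum_le_sum fun (x : Fin N) (_ : x ∈ univ) => L2 c hrnN x
    rw [Finset.sum_add_distrib] at h
    have h1 : (∑ _x : Fin N, 2) = N*2 := by
      simp [Finset.sum_const, Finset.card_univ]
    have h2 : (∑ x : Fin N, ∑ i, if ExX n c x i then (1:ℕ) else 0) = ∑ i, A1 n c i := by
      rw [Finset.sum_comm]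
      exact Finset.sum_congr rfl fun i _ => (Finset.card_filter _ _).symm
    rw [h1, h2] at h
    exact h
  have hCY : N*2 ≤ (∑ y, kX n (tr c) y) + ∑ i, A1 n (tr c) i := by
    have h := Finset.sum_le_sum fun (y : Fin N) (_ : y ∈ univ) => L2 (tr c) hrnN y
    rw [Finset.sum_add_distrib] at h
    have h1 : (∑ _y : Fin N, 2) = N*2 := by
      simp [Finset.sum_const, Finset.card_univ]
    have h2 : (∑ y : Fin N, ∑ i, if ExX n (tr c) y i then (1:ℕ) else 0)
        = ∑ i, A1 n (tr c) i := by
      rw [Finset.sum_comm]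
      exact Finset.sum_congr rfl fun i _ => (Finset.card_filter _ _).symm
    rw [h1, h2] at h
    exact h
  have hH : ∀ i, A1 n c i * N + n * A1 n (tr c) i ≤ n*N + A1 n c i * ((r-1)*n) := L4 c hsm
  have hH' : ∀ i, A1 n (tr c) i * N + n * A1 n c i ≤ n*N + A1 n (tr c) i * ((r-1)*n) :=
    fun i => L4 (tr c) hsm' i
  -- cast to the reals
  have h1r : (1:ℕ) ≤ r := by omega
  have hrc : ((r-1:ℕ):ℝ) = (r:ℝ)-1 := by rw [Nat.cast_sub h1r, Nat.cast_one]
  have hAr : (N:ℝ)*N + (∑ i, (A1 n c i : ℝ) * (A1 n (tr c) i : ℝ))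
      ≤ ((∑ x : Fin N, ∑ y : Fin N, if dX c x (c x y) ≤ n then (1:ℕ) else 0 : ℕ) : ℝ)
        + ((∑ x : Fin N, ∑ y : Fin N, if dX (tr c) y (c x y) ≤ n then (1:ℕ) else 0 : ℕ) : ℝ) := by
    exact_mod_cast hA
  have hSXr : ((∑ x : Fin N, ∑ y : Fin N, if dX c x (c x y) ≤ n then (1:ℕ) else 0 : ℕ):ℝ)
      + (n:ℝ) * ((∑ x, kX n c x : ℕ):ℝ) ≤ (N:ℝ) * ((r:ℝ)*n) := by exact_mod_cast hSX
  have hSYr : ((∑ x : Fin N, ∑ y : Fin N, if dX (tr c) y (c x y) ≤ n then (1:ℕ) else 0 : ℕ):ℝ)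
      + (n:ℝ) * ((∑ y, kX n (tr c) y : ℕ):ℝ) ≤ (N:ℝ) * ((r:ℝ)*n) := by exact_mod_cast hSY
  have hCXr : (N:ℝ)*2 ≤ ((∑ x, kX n c x : ℕ):ℝ) + ∑ i, (A1 n c i : ℝ) := by
    exact_mod_cast hCX
  have hCYr : (N:ℝ)*2 ≤ ((∑ y, kX n (tr c) y : ℕ):ℝ) + ∑ i, (A1 n (tr c) i : ℝ) := by
    exact_mod_cast hCY
  have hHr : ∀ i, (A1 n c i:ℝ) * N + (n:ℝ) * (A1 n (tr c) i:ℝ)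
      ≤ (n:ℝ)*N + (A1 n c i:ℝ) * (((r:ℝ)-1)*n) := by
    intro i
    have h : (A1 n c i:ℝ) * N + (n:ℝ) * (A1 n (tr c) i:ℝ)
        ≤ (n:ℝ)*N + (A1 n c i:ℝ) * (((r-1:ℕ):ℝ)*n) := by exact_mod_cast hH i
    rwa [hrc] at h
  have hH'r : ∀ i, (A1 n (tr c) i:ℝ) * N + (n:ℝ) * (A1 n c i:ℝ)
      ≤ (n:ℝ)*N + (A1 n (tr c) i:ℝ) * (((r:ℝ)-1)*n) := by
    intro i
    have h : (A1 n (tr c) i:ℝ) * N + (n:ℝ) * (A1 n c i:ℝ)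
        ≤ (n:ℝ)*N + (A1 n (tr c) i:ℝ) * (((r-1:ℕ):ℝ)*n) := by exact_mod_cast hH' i
    rwa [hrc] at h
  -- abbreviations
  set P := (N:ℝ) - ((r:ℝ)-1)*(n:ℝ) with hPdef
  set SA := ∑ i, (A1 n c i:ℝ) with hSAdef
  set SB := ∑ i, (A1 n (tr c) i:ℝ) with hSBdef
  set SAB := ∑ i, (A1 n c i:ℝ)*(A1 n (tr c) i:ℝ) with hSABdef
  set KX := ((∑ x, kX n c x : ℕ):ℝ) with hKXdef
  set KY := ((∑ y, kX n (tr c) y : ℕ):ℝ) with hKYdef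
  set PX := ((∑ x : Fin N, ∑ y : Fin N, if dX c x (c x y) ≤ n then (1:ℕ) else 0 : ℕ):ℝ)
    with hPXdef
  set PY := ((∑ x : Fin N, ∑ y : Fin N, if dX (tr c) y (c x y) ≤ n then (1:ℕ) else 0 : ℕ):ℝ)
    with hPYdef
  clear_value P SA SB SAB KX KY PX PY
  -- per-color optimization, summed
  have hPnn : (0:ℝ) ≤ P := by rw [hPdef]; linarith [hxP]
  have hPpos : (0:ℝ) < P := by rw [hPdef]; linarith [hxP]
  have hRmnn : (0:ℝ) ≤ ((r:ℝ)-1)*(n:ℝ) := mul_nonneg (by linarith) hm0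
  have hpc : ∀ i : Fin r,
      (n:ℝ)*((A1 n c i:ℝ)+(A1 n (tr c) i:ℝ))*P
        ≤ (n:ℝ)^2*(N:ℝ) + (A1 n c i:ℝ)*(A1 n (tr c) i:ℝ)*P := by
    intro i
    rw [hPdef]
    exact percolor (n:ℝ) (N:ℝ) (r:ℝ) _ _ hm0 (Nat.cast_nonneg _) (Nat.cast_nonneg _)
      (by rw [hPdef] at hPnn; exact hPnn) hRmnn (hHr i) (hH'r i)
  have hLrw : (∑ i : Fin r, (n:ℝ)*((A1 n c i:ℝ)+(A1 n (tr c) i:ℝ))*P)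
      = (n:ℝ)*(SA+SB)*P := by
    rw [hSAdef, hSBdef, ← Finset.sum_add_distrib, Finset.mul_sum, Finset.sum_mul]
  have hRrw : (∑ i : Fin r, ((n:ℝ)^2*(N:ℝ) + (A1 n c i:ℝ)*(A1 n (tr c) i:ℝ)*P))
      = (r:ℝ)*((n:ℝ)^2*(N:ℝ)) + SAB*P := by
    rw [hSABdef, Finset.sum_add_distrib, Finset.sum_const, Finset.sum_mul]
    simp [Finset.card_univ]
  have hsum2 : (n:ℝ)*(SA+SB)*P ≤ (r:ℝ)*((n:ℝ)^2*(N:ℝ)) + SAB*P := by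
    rw [← hLrw, ← hRrw]
    exact Finset.sum_le_sum fun i _ => hpc i
  -- final contradiction
  exact final_contra (r:ℝ) (n:ℝ) (N:ℝ) P SA SB SAB KX KY PX PY
    (Real.sqrt ((r:ℝ)^2 - 2*(r:ℝ) + 9)) hRr hnr hs2 hs3 hsR hsnn hN hPdef
    (by linarith [hAr]) (by linarith [hSXr]) (by linarith [hSYr])
    (by linarith [hCXr]) (by linarith [hCYr]) hsum2
end

section
/- For all integers r ≥ 3 and n ≥ 1, there exists an r-coloring of the edges of the complete graph on 2(r-1)n vertices that contains no monochromatic copy of the double star S_{n,n}. (Equivalently, R_r(S_{n,n}) ≥ (r-1)2n + 1.) -/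
/-- A monochromatic copy of the double star `S_{k,l}` in an `r`-coloring `c` of the
edges of the complete graph on `Fin N`. -/
def HasMonoDoubleStar (N r k l : ℕ) (c : Fin N → Fin N → Fin r) : Prop :=
  ∃ (u v : Fin N) (a : Fin k → Fin N) (b : Fin l → Fin N) (col : Fin r),
    u ≠ v ∧ Function.Injective a ∧ Function.Injective b ∧
    (∀ i, a i ≠ u ∧ a i ≠ v) ∧ (∀ j, b j ≠ u ∧ b j ≠ v) ∧
    (∀ i j, a i ≠ b j) ∧
    c u v = col ∧ (∀ i, c u (a i) = col) ∧ (∀ j, c v (b j) = col)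

private lemma blkLt {r n : ℕ} (v : Fin (2*(r-1)*n)) : v.val / (2*n) < r - 1 := by
  have hv := v.isLt
  have hn : 0 < n := by
    rcases Nat.eq_zero_or_pos n with h | h
    · subst h; simp at hv
    · exact h
  rw [Nat.div_lt_iff_lt_mul (by omega : 0 < 2*n)]
  calc v.val < 2*(r-1)*n := hv
    _ = (r-1)*(2*n) := by ring

private def dsColor (r n : ℕ) (hr : 3 ≤ r) :
    Fin (2*(r-1)*n) → Fin (2*(r-1)*n) → Fin r := fun u v =>
  if u.val / (2*n) = v.val / (2*n) then ⟨r-1, by omega⟩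
  else if (u.val / n) % 2 = (v.val / n) % 2
    then ⟨min (u.val/(2*n)) (v.val/(2*n)), by
      have h1 := blkLt u; have h2 := blkLt v; omega⟩
    else ⟨max (u.val/(2*n)) (v.val/(2*n)), by
      have h1 := blkLt u; have h2 := blkLt v; omega⟩

private lemma dsColor_symm (r n : ℕ) (hr : 3 ≤ r) (u v : Fin (2*(r-1)*n)) :
    dsColor r n hr u v = dsColor r n hr v u := by
  unfold dsColor
  by_cases h1 : u.val/(2*n) = v.val/(2*n)
  · simp only [if_pos h1, if_pos h1.symm]
  · have h1' : ¬ v.val/(2*n) = u.val/(2*n) := fun h => h1 h.symm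
    simp only [if_neg h1, if_neg h1']
    by_cases h2 : (u.val/n)%2 = (v.val/n)%2
    · have h2' : (v.val/n)%2 = (u.val/n)%2 := h2.symm
      simp only [if_pos h2, if_pos h2']
      exact Fin.ext (by simp [Nat.min_comm])
    · have h2' : ¬ (v.val/n)%2 = (u.val/n)%2 := fun h => h2 h.symm
      simp only [if_neg h2, if_neg h2']
      exact Fin.ext (by simp [Nat.max_comm])

private lemma dsColor_last {r n : ℕ} {hr : 3 ≤ r} {u x : Fin (2*(r-1)*n)}
    (h : (dsColor r n hr u x).val = r-1) : u.val/(2*n) = x.val/(2*n) := by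
  by_contra hne
  have h1 := blkLt u; have h2 := blkLt x
  unfold dsColor at h
  rw [if_neg hne] at h
  by_cases h3 : (u.val/n)%2 = (x.val/n)%2
  · rw [if_pos h3] at h
    have h' : min (u.val/(2*n)) (x.val/(2*n)) = r-1 := h
    omega
  · rw [if_neg h3] at h
    have h' : max (u.val/(2*n)) (x.val/(2*n)) = r-1 := h
    omega

private lemma dsColor_mem {r n : ℕ} {hr : 3 ≤ r} {u v : Fin (2*(r-1)*n)}
    (hne : u.val/(2*n) ≠ v.val/(2*n)) :
    (dsColor r n hr u v).val = u.val/(2*n) ∨ (dsColor r n hr u v).val = v.val/(2*n) := by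
  unfold dsColor
  rw [if_neg hne]
  by_cases h3 : (u.val/n)%2 = (v.val/n)%2
  · rw [if_pos h3]
    have := min_choice (u.val/(2*n)) (v.val/(2*n))
    rcases this with h | h
    · left; exact h
    · right; exact h
  · rw [if_neg h3]
    have := max_choice (u.val/(2*n)) (v.val/(2*n))
    rcases this with h | h
    · left; exact h
    · right; exact h

private lemma dsColor_nbr {r n : ℕ} {hr : 3 ≤ r} {w x : Fin (2*(r-1)*n)} {k : ℕ}
    (hklt : k < r-1) (hkw : w.val/(2*n) ≠ k)
    (h : (dsColor r n hr w x).val = k) :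
    x.val / n = 2*k + (if k < w.val/(2*n) then (w.val/n)%2 else 1 - (w.val/n)%2) := by
  have hw2 : w.val/(2*n) = w.val/n/2 := by
    rw [Nat.div_div_eq_div_mul, Nat.mul_comm n 2]
  have hx2 : x.val/(2*n) = x.val/n/2 := by
    rw [Nat.div_div_eq_div_mul, Nat.mul_comm n 2]
  unfold dsColor at h
  by_cases h1 : w.val/(2*n) = x.val/(2*n)
  · rw [if_pos h1] at h
    have h' : r - 1 = k := h
    omega
  · rw [if_neg h1] at h
    by_cases h3 : (w.val/n)%2 = (x.val/n)%2
    · rw [if_pos h3] at h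
      have h' : min (w.val/(2*n)) (x.val/(2*n)) = k := h
      have hc : k < w.val/(2*n) := by omega
      rw [if_pos hc]
      omega
    · rw [if_neg h3] at h
      have h' : max (w.val/(2*n)) (x.val/(2*n)) = k := h
      have hc : ¬ k < w.val/(2*n) := by omega
      rw [if_neg hc]
      omega

private lemma cardChunk {N : ℕ} (d t : ℕ) (hd : 0 < d) :
    ((Finset.univ : Finset (Fin N)).filter (fun x => x.val / d = t)).card ≤ d := by
  classical
  have h1 : ((Finset.univ : Finset (Fin N)).filter (fun x => x.val / d = t)).card
      = (((Finset.univ : Finset (Fin N)).filter (fun x => x.val / d = t)).image Fin.val).card :=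
    (Finset.card_image_of_injective _ Fin.val_injective).symm
  rw [h1]
  have h2 : (((Finset.univ : Finset (Fin N)).filter (fun x => x.val / d = t)).image Fin.val)
      ⊆ Finset.Ico (d*t) (d*t+d) := by
    intro m hm
    simp only [Finset.mem_image, Finset.mem_filter, Finset.mem_univ, true_and] at hm
    obtain ⟨y, hy, rfl⟩ := hm
    have hle : t * d ≤ y.val := by
      have := Nat.div_mul_le_self y.val d
      rw [hy] at this
      exact this
    have hlt : y.val < (t+1)*d := (Nat.div_lt_iff_lt_mul hd).mp (by omega)
    have he1 : (t+1)*d = d*t + d := by ring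
    have he2 : t*d = d*t := by ring
    simp only [Finset.mem_Ico]
    omega
  have := Finset.card_le_card h2
  rw [Nat.card_Ico] at this
  omega

/-- `R_r(S_{n,n}) ≥ (r-1)·2n + 1`: there is an `r`-coloring of `K_{2(r-1)n}` with
no monochromatic `S_{n,n}`. -/
theorem stmt3 (r n : ℕ) (hr : 3 ≤ r) (hn : 1 ≤ n) :
    ∃ c : Fin (2*(r-1)*n) → Fin (2*(r-1)*n) → Fin r,
      (∀ u v, c u v = c v u) ∧ ¬ HasMonoDoubleStar (2*(r-1)*n) r n n c := by
  classical
  refine ⟨dsColor r n hr, dsColor_symm r n hr, ?_⟩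
  intro hmono
  obtain ⟨u, v, a, b, col, huv, ha, hb, hau, hbv, hab, hcuv, hca, hcb⟩ := hmono
  have hn0 : 0 < n := hn
  by_cases hsame : u.val/(2*n) = v.val/(2*n)
  · -- all 2n+2 vertices lie in one block of size 2n
    have hcol : col.val = r-1 := by
      rw [← hcuv]
      unfold dsColor
      rw [if_pos hsame]
    have amem : ∀ i, (a i).val/(2*n) = u.val/(2*n) := fun i =>
      (dsColor_last ((congrArg Fin.val (hca i)).trans hcol)).symm
    have bmem : ∀ j, (b j).val/(2*n) = u.val/(2*n) := fun j =>
      ((dsColor_last ((congrArg Fin.val (hcb j)).trans hcol)).symm).trans hsame.symm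
    have hS := cardChunk (N := 2*(r-1)*n) (2*n) (u.val/(2*n)) (by omega)
    have hsub : insert u (insert v ((Finset.univ.image a) ∪ (Finset.univ.image b)))
        ⊆ (Finset.univ : Finset (Fin (2*(r-1)*n))).filter
            (fun x => x.val/(2*n) = u.val/(2*n)) := by
      intro x hx
      simp only [Finset.mem_insert, Finset.mem_union, Finset.mem_image, Finset.mem_univ,
        true_and, Finset.mem_filter] at hx ⊢
      rcases hx with rfl | rfl | ⟨i, rfl⟩ | ⟨j, rfl⟩
      · rfl
      · exact hsame.symm
      · exact amem i
      · exact bmem j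
    have hdisj : Disjoint (Finset.univ.image a) (Finset.univ.image b) := by
      rw [Finset.disjoint_left]
      intro x hxa hxb
      simp only [Finset.mem_image, Finset.mem_univ, true_and] at hxa hxb
      obtain ⟨i, rfl⟩ := hxa
      obtain ⟨j, hj⟩ := hxb
      exact hab i j hj.symm
    have hvmem : v ∉ (Finset.univ.image a) ∪ (Finset.univ.image b) := by
      simp only [Finset.mem_union, Finset.mem_image, Finset.mem_univ, true_and]
      rintro (⟨i, hi⟩ | ⟨j, hj⟩)
      · exact (hau i).2 hi
      · exact (hbv j).2 hj
    have humem : u ∉ insert v ((Finset.univ.image a) ∪ (Finset.univ.image b)) := by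
      simp only [Finset.mem_insert, Finset.mem_union, Finset.mem_image, Finset.mem_univ,
        true_and]
      rintro (h | ⟨i, hi⟩ | ⟨j, hj⟩)
      · exact huv h
      · exact (hau i).1 hi
      · exact (hbv j).1 hj
    have hcard : (insert u (insert v ((Finset.univ.image a) ∪ (Finset.univ.image b)))).card
        = 2*n + 2 := by
      rw [Finset.card_insert_of_notMem humem, Finset.card_insert_of_notMem hvmem,
        Finset.card_union_of_disjoint hdisj,
        Finset.card_image_of_injective _ ha, Finset.card_image_of_injective _ hb]
      simp
      omega
    have := Finset.card_le_card hsub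
    omega
  · -- cross edge: one endpoint has color-degree ≤ n
    have hkor := dsColor_mem (hr := hr) hsame
    have hkval : col.val = (dsColor r n hr u v).val := (congrArg Fin.val hcuv).symm
    have hk1 := blkLt u
    have hk2 := blkLt v
    have hklt : col.val < r - 1 := by rcases hkor with h | h <;> omega
    have key : ∀ (w p : Fin (2*(r-1)*n)) (f : Fin n → Fin (2*(r-1)*n)),
        Function.Injective f → (∀ i, f i ≠ p) →
        dsColor r n hr w p = col → (∀ i, dsColor r n hr w (f i) = col) →
        w.val/(2*n) ≠ col.val → False := by
      intro w p f hf hfp hwp hwf hwk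
      set t := 2*col.val + (if col.val < w.val/(2*n) then (w.val/n)%2 else 1 - (w.val/n)%2)
        with ht
      have hp : p.val/n = t := dsColor_nbr hklt hwk (congrArg Fin.val hwp)
      have hfi : ∀ i, (f i).val/n = t := fun i =>
        dsColor_nbr hklt hwk (congrArg Fin.val (hwf i))
      have hS := cardChunk (N := 2*(r-1)*n) n t hn0
      have hsub : insert p (Finset.univ.image f)
          ⊆ (Finset.univ : Finset (Fin (2*(r-1)*n))).filter (fun x => x.val/n = t) := by
        intro x hx
        simp only [Finset.mem_insert, Finset.mem_image, Finset.mem_univ, true_and,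
          Finset.mem_filter] at hx ⊢
        rcases hx with rfl | ⟨i, rfl⟩
        · exact hp
        · exact hfi i
      have hpm : p ∉ Finset.univ.image f := by
        simp only [Finset.mem_image, Finset.mem_univ, true_and]
        rintro ⟨i, hi⟩
        exact hfp i hi
      have hcard : (insert p (Finset.univ.image f)).card = n + 1 := by
        rw [Finset.card_insert_of_notMem hpm, Finset.card_image_of_injective _ hf]
        simp
      have := Finset.card_le_card hsub
      omega
    have hone : col.val ≠ u.val/(2*n) ∨ col.val ≠ v.val/(2*n) := by
      rcases hkor with h | h
      · right; omega
      · left; omega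
    rcases hone with h | h
    · exact key u v a ha (fun i => (hau i).2) hcuv hca (fun hh => h hh.symm)
    · exact key v u b hb (fun j => (hbv j).1)
        (by rw [← dsColor_symm r n hr u v]; exact hcuv) hcb (fun hh => h hh.symm)
end

section
/- For all integers r ≥ 1 and n ≥ 1, if G is a simple graph on exactly 2rn+2 vertices whose number of edges e(G) satisfies r·e(G) ≥ (2rn+2)(2rn+1)/2 (that is, e(G) ≥ (1/r)·binom(2rn+2, 2)), then G contains the double star S_{n,n} as a subgraph. -/
/-- A simple graph `G` contains the double star `S_{k,l}`: there are distinct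
vertices `u, v`, leaves `a i` of `u` and `b j` of `v`, all distinct, with all the
required adjacencies. -/
def GraphHasDoubleStar {V : Type*} (G : SimpleGraph V) (k l : ℕ) : Prop :=
  ∃ (u v : V) (a : Fin k → V) (b : Fin l → V),
    u ≠ v ∧ Function.Injective a ∧ Function.Injective b ∧
    (∀ i, a i ≠ u ∧ a i ≠ v) ∧ (∀ j, b j ≠ u ∧ b j ≠ v) ∧
    (∀ i j, a i ≠ b j) ∧
    G.Adj u v ∧ (∀ i, G.Adj u (a i)) ∧ (∀ j, G.Adj v (b j))

/-- Weighted handshake: if every graph edge has an endpoint of degree `≤ n`, or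
both endpoints of degree `≤ 2n`, then `e(G) ≤ n·|V|`.  Contrapositive form:
if `e(G) > n·|V|` then some edge `uv` has `deg u ≥ 2n+1` and `deg v ≥ n+1`. -/
theorem exists_good_edge {V : Type*} [Fintype V] [DecidableEq V]
    (G : SimpleGraph V) [DecidableRel G.Adj] (n : ℕ)
    (h : n * Fintype.card V < G.edgeFinset.card) :
    ∃ u v, G.Adj u v ∧ 2*n+1 ≤ G.degree u ∧ n+1 ≤ G.degree v := by
  by_contra hcon
  push_neg at hcon
  -- weight function
  set y : V → ℕ := fun v => if G.degree v ≤ n then 2 else if G.degree v ≤ 2*n then 1 else 0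
    with hy
  -- pointwise bound on edges
  have hedge : ∀ v w : V, G.Adj v w → 2 ≤ y v + y w := by
    intro v w hadj
    have hvw : 2*n+1 ≤ G.degree v → G.degree w < n+1 := fun hh => hcon v w hadj hh
    have hwv : 2*n+1 ≤ G.degree w → G.degree v < n+1 := fun hh => hcon w v hadj.symm hh
    simp only [hy]
    split_ifs with h1 h2 h3 h4 h5 h6 h7 <;> omega
  -- the two double-sum identities
  have hfilter : ∀ v : V, G.neighborFinset v = Finset.univ.filter (G.Adj v) := by
    intro v; ext w; simp [SimpleGraph.mem_neighborFinset]
  have sum1 : ∀ v : V, ∑ _w ∈ G.neighborFinset v, y v = y v * G.degree v := by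
    intro v
    rw [Finset.sum_const, SimpleGraph.card_neighborFinset_eq_degree, smul_eq_mul, mul_comm]
  have sum2 : ∑ v : V, ∑ w ∈ G.neighborFinset v, y w = ∑ v : V, y v * G.degree v := by
    calc ∑ v : V, ∑ w ∈ G.neighborFinset v, y w
        = ∑ v : V, ∑ w : V, if G.Adj v w then y w else 0 := by
          refine Finset.sum_congr rfl fun v _ => ?_
          rw [hfilter, Finset.sum_filter]
      _ = ∑ w : V, ∑ v : V, if G.Adj v w then y w else 0 := Finset.sum_comm
      _ = ∑ w : V, y w * G.degree w := by
          refine Finset.sum_congr rfl fun w _ => ?_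
          rw [← Finset.sum_filter]
          have hfw : Finset.univ.filter (fun v => G.Adj v w) = G.neighborFinset w := by
            ext v; simp [SimpleGraph.mem_neighborFinset, SimpleGraph.adj_comm]
          rw [hfw, Finset.sum_const, SimpleGraph.card_neighborFinset_eq_degree,
            smul_eq_mul, mul_comm]
  -- main inequality chain
  have key : 2 * ∑ v : V, G.degree v ≤ 2 * ∑ v : V, y v * G.degree v := by
    calc 2 * ∑ v : V, G.degree v
        = ∑ v : V, ∑ _w ∈ G.neighborFinset v, 2 := by
          rw [Finset.mul_sum]
          refine Finset.sum_congr rfl fun v _ => ?_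
          rw [Finset.sum_const, SimpleGraph.card_neighborFinset_eq_degree, smul_eq_mul, mul_comm]
      _ ≤ ∑ v : V, ∑ w ∈ G.neighborFinset v, (y v + y w) := by
          refine Finset.sum_le_sum fun v _ => Finset.sum_le_sum fun w hw => ?_
          exact hedge v w ((SimpleGraph.mem_neighborFinset G v w).mp hw)
      _ = ∑ v : V, ((∑ _w ∈ G.neighborFinset v, y v) + ∑ w ∈ G.neighborFinset v, y w) := by
          refine Finset.sum_congr rfl fun v _ => ?_
          rw [Finset.sum_add_distrib]
      _ = ∑ v : V, y v * G.degree v + ∑ v : V, ∑ w ∈ G.neighborFinset v, y w := by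
          rw [Finset.sum_add_distrib]
          congr 1
          exact Finset.sum_congr rfl fun v _ => sum1 v
      _ = 2 * ∑ v : V, y v * G.degree v := by rw [sum2]; ring
  have hbd : ∑ v : V, y v * G.degree v ≤ ∑ _v : V, 2 * n := by
    refine Finset.sum_le_sum fun v _ => ?_
    simp only [hy]
    split_ifs with h1 h2 <;> omega
  rw [Finset.sum_const, Finset.card_univ, smul_eq_mul] at hbd
  rw [SimpleGraph.sum_degrees_eq_twice_card_edges] at key
  have hr2 : Fintype.card V * (2 * n) = 2 * (n * Fintype.card V) := by ring
  rw [hr2] at hbd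
  omega

/-- If `G` has `2rn+2` vertices and `e(G) ≥ (1/r)·C(2rn+2, 2)`, then `S_{n,n} ⊆ G`. -/
theorem stmt4 (r n : ℕ) (hr : 1 ≤ r) (hn : 1 ≤ n)
    (G : SimpleGraph (Fin (2*r*n+2))) [DecidableRel G.Adj]
    (hE : (2*r*n+2)*(2*r*n+1)/2 ≤ r * G.edgeFinset.card) :
    GraphHasDoubleStar G n n := by
  -- first: e(G) > n·|V|
  have hcardV : Fintype.card (Fin (2*r*n+2)) = 2*r*n+2 := Fintype.card_fin _
  have hdiv : (2*r*n+2)*(2*r*n+1)/2 = (r*n+1)*(2*r*n+1) := by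
    have : (2*r*n+2)*(2*r*n+1) = ((r*n+1)*(2*r*n+1))*2 := by ring
    rw [this, Nat.mul_div_cancel _ two_pos]
  rw [hdiv] at hE
  have hmany : n * Fintype.card (Fin (2*r*n+2)) < G.edgeFinset.card := by
    rw [hcardV]
    by_contra hc
    push_neg at hc
    have h2 : r * G.edgeFinset.card ≤ r * (n * (2*r*n+2)) := Nat.mul_le_mul_left r hc
    have h3 : (r*n+1)*(2*r*n+1) ≤ r * (n * (2*r*n+2)) := le_trans hE h2
    nlinarith [h3, Nat.mul_le_mul hr hn]
  obtain ⟨u, v, hadj, hdu, hdv⟩ := exists_good_edge G n hmany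
  -- choose the leaves of v
  have hBpool : n ≤ (G.neighborFinset v \ {u}).card := by
    have hu : ({u} : Finset (Fin (2*r*n+2))) ⊆ G.neighborFinset v := by
      simp [SimpleGraph.mem_neighborFinset, hadj.symm]
    rw [Finset.card_sdiff_of_subset hu, SimpleGraph.card_neighborFinset_eq_degree, Finset.card_singleton]
    omega
  obtain ⟨B, hBsub, hBcard⟩ := Finset.exists_subset_card_eq hBpool
  -- choose the leaves of u
  have hApool : n ≤ (G.neighborFinset u \ insert v B).card := by
    calc n = (2*n+1) - (n+1) := by omega
      _ ≤ G.degree u - (insert v B).card := by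
          have h1 : (insert v B).card ≤ n + 1 := by
            calc (insert v B).card ≤ B.card + 1 := Finset.card_insert_le v B
              _ = n + 1 := by rw [hBcard]
          omega
      _ ≤ (G.neighborFinset u \ insert v B).card := by
          rw [← SimpleGraph.card_neighborFinset_eq_degree]
          exact Finset.le_card_sdiff _ _
  obtain ⟨A, hAsub, hAcard⟩ := Finset.exists_subset_card_eq hApool
  -- enumerate A and B
  let ea := A.orderIsoOfFin hAcard
  let eb := B.orderIsoOfFin hBcard
  refine ⟨u, v, fun i => (ea i : Fin (2*r*n+2)), fun j => (eb j : Fin (2*r*n+2)),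
    hadj.ne, ?_, ?_, ?_, ?_, ?_, hadj, ?_, ?_⟩
  · exact Subtype.coe_injective.comp ea.injective
  · exact Subtype.coe_injective.comp eb.injective
  · intro i
    have hmem := hAsub (ea i).2
    rw [Finset.mem_sdiff] at hmem
    constructor
    · intro h
      replace h : (ea i : Fin (2*r*n+2)) = u := h
      have : u ∈ G.neighborFinset u := h ▸ hmem.1
      simp [SimpleGraph.mem_neighborFinset] at this
    · intro h
      replace h : (ea i : Fin (2*r*n+2)) = v := h
      exact hmem.2 (by rw [h]; exact Finset.mem_insert_self v B)
  · intro j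
    have hmem := hBsub (eb j).2
    rw [Finset.mem_sdiff] at hmem
    constructor
    · intro h
      replace h : (eb j : Fin (2*r*n+2)) = u := h
      exact hmem.2 (by rw [h]; exact Finset.mem_singleton_self u)
    · intro h
      replace h : (eb j : Fin (2*r*n+2)) = v := h
      have : v ∈ G.neighborFinset v := h ▸ hmem.1
      simp [SimpleGraph.mem_neighborFinset] at this
  · intro i j h
    replace h : (ea i : Fin (2*r*n+2)) = (eb j : Fin (2*r*n+2)) := h
    have hmemA := hAsub (ea i).2
    rw [Finset.mem_sdiff] at hmemA
    have hmemB : ((eb j : Fin (2*r*n+2))) ∈ B := (eb j).2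
    exact hmemA.2 (Finset.mem_insert_of_mem (h ▸ hmemB))
  · intro i
    have hmem := hAsub (ea i).2
    rw [Finset.mem_sdiff] at hmem
    exact (SimpleGraph.mem_neighborFinset G u _).mp hmem.1
  · intro j
    have hmem := hBsub (eb j).2
    rw [Finset.mem_sdiff] at hmem
    exact (SimpleGraph.mem_neighborFinset G v _).mp hmem.1
end

section
/- For all integers k ≥ 1 and n ≥ 2, setting r = 2k and N = (3k-1)n, there exists an r-coloring of the edges of the complete bipartite graph K_{N,N} that contains no monochromatic copy of the double star S_{n,n}. (Equivalently, for even r, R^bip_r(S_{n,n}) ≥ (3r/2 - 1)n + 1.) -/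
/-- Blow-up lemma: a pattern matrix `M` on `[m] × [m]` in which every entry is
unique in its row or unique in its column yields, after an `n`-fold blow-up,
a coloring of `K_{mn,mn}` with no monochromatic double star `S_{n,n}`. -/
lemma dsBlowup (m r n : ℕ) (hn : 1 ≤ n) (M : ℕ → ℕ → ℕ)
    (huniq : ∀ i j, i < m → j < m →
      (∀ j' < m, M i j' = M i j → j' = j) ∨ (∀ i' < m, M i' j = M i j → i' = i))
    (c : Fin (m * n) → Fin (m * n) → Fin r)
    (hc : ∀ x y, (c x y : ℕ) = M (x.val / n) (y.val / n)) :
    ¬ BipHasMonoDoubleStar (m * n) r n n c := by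
  rintro ⟨u, v, a, b, col, inja, injb, hav, hbu, huv, hua, hbv⟩
  have hn0 : 0 < n := hn
  have hdiv : ∀ x : Fin (m * n), x.val / n < m := by
    intro x
    exact (Nat.div_lt_iff_lt_mul hn0).mpr x.isLt
  rcases huniq (u.val / n) (v.val / n) (hdiv u) (hdiv v) with hrow | hcol
  · -- all `a t` and `v` lie in block `v.val / n` of size ≤ n : contradiction
    have hblock : ∀ t : Fin n, (a t).val / n = v.val / n := by
      intro t
      apply hrow _ (hdiv (a t))
      have e1 := congrArg Fin.val (hua t)
      have e2 := congrArg Fin.val huv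
      rw [hc] at e1 e2
      omega
    have hb : ∀ t : Fin (n+1),
        ((if h : (t : ℕ) < n then a ⟨t, h⟩ else v) : Fin (m*n)).val / n = v.val / n := by
      intro t
      by_cases h : (t : ℕ) < n
      · rw [dif_pos h]; exact hblock _
      · rw [dif_neg h]
    have hinj : Function.Injective
        (fun t : Fin (n+1) =>
          (⟨((if h : (t : ℕ) < n then a ⟨t, h⟩ else v) : Fin (m*n)).val % n,
            Nat.mod_lt _ hn0⟩ : Fin n)) := by
      intro t s h
      simp only [Fin.mk.injEq] at h
      have ht := hb t
      have hs := hb s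
      have hval : ((if h : (t : ℕ) < n then a ⟨t, h⟩ else v) : Fin (m*n)).val
          = ((if h : (s : ℕ) < n then a ⟨s, h⟩ else v) : Fin (m*n)).val := by
        have d1 := Nat.div_add_mod ((if h : (t : ℕ) < n then a ⟨t, h⟩ else v) : Fin (m*n)).val n
        have d2 := Nat.div_add_mod ((if h : (s : ℕ) < n then a ⟨s, h⟩ else v) : Fin (m*n)).val n
        rw [ht, h] at d1
        rw [hs] at d2
        omega
      by_cases h1 : (t : ℕ) < n <;> by_cases h2 : (s : ℕ) < n
      · rw [dif_pos h1, dif_pos h2] at hval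
        have := congrArg Fin.val (inja (Fin.ext hval))
        exact Fin.ext this
      · rw [dif_pos h1, dif_neg h2] at hval
        exact absurd (Fin.ext hval) (hav _)
      · rw [dif_neg h1, dif_pos h2] at hval
        exact absurd (Fin.ext hval.symm) (hav _)
      · have : (t : ℕ) = (s : ℕ) := by have := t.isLt; have := s.isLt; omega
        exact Fin.ext this
    have hcard := Fintype.card_le_of_injective _ hinj
    simp only [Fintype.card_fin] at hcard
    omega
  · -- symmetric: all `b t` and `u` lie in block `u.val / n`
    have hblock : ∀ t : Fin n, (b t).val / n = u.val / n := by
      intro t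
      apply hcol _ (hdiv (b t))
      have e1 := congrArg Fin.val (hbv t)
      have e2 := congrArg Fin.val huv
      rw [hc] at e1 e2
      omega
    have hb : ∀ t : Fin (n+1),
        ((if h : (t : ℕ) < n then b ⟨t, h⟩ else u) : Fin (m*n)).val / n = u.val / n := by
      intro t
      by_cases h : (t : ℕ) < n
      · rw [dif_pos h]; exact hblock _
      · rw [dif_neg h]
    have hinj : Function.Injective
        (fun t : Fin (n+1) =>
          (⟨((if h : (t : ℕ) < n then b ⟨t, h⟩ else u) : Fin (m*n)).val % n,
            Nat.mod_lt _ hn0⟩ : Fin n)) := by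
      intro t s h
      simp only [Fin.mk.injEq] at h
      have ht := hb t
      have hs := hb s
      have hval : ((if h : (t : ℕ) < n then b ⟨t, h⟩ else u) : Fin (m*n)).val
          = ((if h : (s : ℕ) < n then b ⟨s, h⟩ else u) : Fin (m*n)).val := by
        have d1 := Nat.div_add_mod ((if h : (t : ℕ) < n then b ⟨t, h⟩ else u) : Fin (m*n)).val n
        have d2 := Nat.div_add_mod ((if h : (s : ℕ) < n then b ⟨s, h⟩ else u) : Fin (m*n)).val n
        rw [ht, h] at d1
        rw [hs] at d2
        omega
      by_cases h1 : (t : ℕ) < n <;> by_cases h2 : (s : ℕ) < n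
      · rw [dif_pos h1, dif_pos h2] at hval
        have := congrArg Fin.val (injb (Fin.ext hval))
        exact Fin.ext this
      · rw [dif_pos h1, dif_neg h2] at hval
        exact absurd (Fin.ext hval) (hbu _)
      · rw [dif_neg h1, dif_pos h2] at hval
        exact absurd (Fin.ext hval.symm) (hbu _)
      · have : (t : ℕ) = (s : ℕ) := by have := t.isLt; have := s.isLt; omega
        exact Fin.ext this
    have hcard := Fintype.card_le_of_injective _ hinj
    simp only [Fintype.card_fin] at hcard
    omega

/-! ### The pattern matrix for `k ≥ 3`

Rows and columns `v ∈ [0, 3k-2]` are grouped into classes: `v < 2k` has class `v`,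
position `0`; `v ≥ 2k` has class `v - 2k` and position `1`.  Classes `< k-1` are
"paired" (two rows each), classes in `[k-1, 2k-1]` are "single".  `dsA` describes
the color of a cell in terms of classes and positions. -/

def dsSucc (k a : ℕ) : ℕ := if a = 2*k - 1 then k - 1 else a + 1

def dsA (k a p b q : ℕ) : ℕ :=
  if a = b then (if a < k - 1 then (k-1) + p + 2 * q else dsSucc k a)
  else if a < k - 1 then
    (if b < k - 1 then (if p = q then a else b)
     else (if (b + k + 1) % 2 = p then a else b))
  else if b < k - 1 then (if q = ((a - (k-1)) / 2) % 2 then b else a)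
  else (if b = dsSucc k a then a else b)

set_option maxHeartbeats 4000000 in
lemma dsKey1 (k a p b q a' p' : ℕ) (hk : 3 ≤ k)
    (ha : a < 2*k) (hb : b < 2*k) (ha' : a' < 2*k)
    (hpa : p ≤ 1) (hqb : q ≤ 1) (hpa' : p' ≤ 1)
    (hpP : p = 1 → a < k-1) (hqP : q = 1 → b < k-1) (hp'P : p' = 1 → a' < k-1)
    (hside : a = b ∨ dsA k a p b q = a)
    (heq : dsA k a' p' b q = dsA k a p b q) : a' = a ∧ p' = p := by
  simp only [dsA, dsSucc] at hside heq
  split_ifs at hside heq <;> omega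

set_option maxHeartbeats 4000000 in
lemma dsKey2 (k a p b q b' q' : ℕ) (hk : 3 ≤ k)
    (ha : a < 2*k) (hb : b < 2*k) (hb' : b' < 2*k)
    (hpa : p ≤ 1) (hqb : q ≤ 1) (hqb' : q' ≤ 1)
    (hpP : p = 1 → a < k-1) (hqP : q = 1 → b < k-1) (hq'P : q' = 1 → b' < k-1)
    (hside : ¬(a = b ∨ dsA k a p b q = a))
    (heq : dsA k a p b' q' = dsA k a p b q) : b' = b ∧ q' = q := by
  simp only [dsA, dsSucc] at hside heq
  split_ifs at hside heq <;> omega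

set_option maxHeartbeats 1000000 in
lemma dsA_lt (k a p b q : ℕ) (hk : 3 ≤ k)
    (ha : a < 2*k) (hb : b < 2*k) (hpa : p ≤ 1) (hqb : q ≤ 1) :
    dsA k a p b q < 2*k := by
  simp only [dsA, dsSucc]
  split_ifs <;> omega

def dsCls (k v : ℕ) : ℕ := if v < 2*k then v else v - 2*k
def dsPos (k v : ℕ) : ℕ := if v < 2*k then 0 else 1

def dsM (k i j : ℕ) : ℕ := dsA k (dsCls k i) (dsPos k i) (dsCls k j) (dsPos k j)

lemma dsValid (k v : ℕ) (hk : 3 ≤ k) (hv : v < 3*k-1) :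
    dsCls k v < 2*k ∧ dsPos k v ≤ 1 ∧ (dsPos k v = 1 → dsCls k v < k-1) := by
  refine ⟨?_, ?_, ?_⟩
  · simp only [dsCls]; split_ifs <;> omega
  · simp only [dsPos]; split_ifs <;> omega
  · intro h1
    simp only [dsCls, dsPos] at h1 ⊢
    split_ifs at h1 ⊢ <;> omega

lemma dsRecover (k v v' : ℕ) (hv : v < 3*k-1) (hv' : v' < 3*k-1)
    (h1 : dsCls k v' = dsCls k v) (h2 : dsPos k v' = dsPos k v) : v' = v := by
  simp only [dsCls, dsPos] at h1 h2
  split_ifs at h1 h2 <;> omega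

lemma dsM_prop (k i j : ℕ) (hk : 3 ≤ k) (hi : i < 3*k-1) (hj : j < 3*k-1) :
    (∀ j' < 3*k-1, dsM k i j' = dsM k i j → j' = j) ∨
    (∀ i' < 3*k-1, dsM k i' j = dsM k i j → i' = i) := by
  obtain ⟨ha, hpa, hpP⟩ := dsValid k i hk hi
  obtain ⟨hb, hqb, hqP⟩ := dsValid k j hk hj
  by_cases hside : dsCls k i = dsCls k j ∨ dsM k i j = dsCls k i
  · right
    intro i' hi' heq
    obtain ⟨ha', hpa', hp'P⟩ := dsValid k i' hk hi'
    obtain ⟨e1, e2⟩ := dsKey1 k (dsCls k i) (dsPos k i) (dsCls k j) (dsPos k j)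
      (dsCls k i') (dsPos k i') hk ha hb ha' hpa hqb hpa' hpP hqP hp'P hside heq
    exact dsRecover k i i' hi hi' e1 e2
  · left
    intro j' hj' heq
    obtain ⟨hb', hqb', hq'P⟩ := dsValid k j' hk hj'
    obtain ⟨e1, e2⟩ := dsKey2 k (dsCls k i) (dsPos k i) (dsCls k j) (dsPos k j)
      (dsCls k j') (dsPos k j') hk ha hb hb' hpa hqb hqb' hpP hqP hq'P hside heq
    exact dsRecover k j j' hj hj' e1 e2

lemma dsM_lt (k i j : ℕ) (hk : 3 ≤ k) (hi : i < 3*k-1) (hj : j < 3*k-1) :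
    dsM k i j < 2*k := by
  obtain ⟨ha, hpa, _⟩ := dsValid k i hk hi
  obtain ⟨hb, hqb, _⟩ := dsValid k j hk hj
  exact dsA_lt k _ _ _ _ hk ha hb hpa hqb

/-! ### Small cases `k = 1, 2` -/

def dsM1 (i j : ℕ) : ℕ := (i + j) % 2

def dsM2 (i j : ℕ) : ℕ :=
  (([[0,0,0,1,1],[1,2,3,0,2],[1,3,2,0,3],[2,1,3,2,0],[3,1,2,3,0]] :
    List (List ℕ)).getD i []).getD j 0

lemma dsM2_prop : ∀ i < 5, ∀ j < 5,
    (∀ j' < 5, dsM2 i j' = dsM2 i j → j' = j) ∨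
    (∀ i' < 5, dsM2 i' j = dsM2 i j → i' = i) := by decide

lemma dsM2_lt : ∀ i < 5, ∀ j < 5, dsM2 i j < 4 := by decide

/-- For even `r = 2k`, `R^bip_r(S_{n,n}) ≥ (3r/2 - 1)n + 1`: there is a
`2k`-coloring of `K_{(3k-1)n,(3k-1)n}` with no monochromatic `S_{n,n}`. -/
theorem stmt6 (k n : ℕ) (hk : 1 ≤ k) (hn : 2 ≤ n) :
    ∃ c : Fin ((3*k-1)*n) → Fin ((3*k-1)*n) → Fin (2*k),
      ¬ BipHasMonoDoubleStar ((3*k-1)*n) (2*k) n n c := by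
  have hn1 : 1 ≤ n := by omega
  have hn0 : 0 < n := by omega
  rcases (show k = 1 ∨ k = 2 ∨ 3 ≤ k by omega) with rfl | rfl | hk3
  · -- k = 1 : two colors, matrix [[0,1],[1,0]]
    show ∃ c : Fin (2*n) → Fin (2*n) → Fin 2, ¬ BipHasMonoDoubleStar (2*n) 2 n n c
    refine ⟨fun x y => ⟨dsM1 ((x : ℕ)/n) ((y : ℕ)/n), by simp only [dsM1]; omega⟩, ?_⟩
    exact dsBlowup 2 2 n hn1 dsM1
      (fun i j hi hj => Or.inl (fun j' hj' h => by
        simp only [dsM1] at h; omega))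
      _ (fun x y => rfl)
  · -- k = 2 : explicit 5×5 matrix
    show ∃ c : Fin (5*n) → Fin (5*n) → Fin 4, ¬ BipHasMonoDoubleStar (5*n) 4 n n c
    have hd : ∀ x : Fin (5*n), (x : ℕ)/n < 5 :=
      fun x => (Nat.div_lt_iff_lt_mul hn0).mpr x.isLt
    refine ⟨fun x y => ⟨dsM2 ((x : ℕ)/n) ((y : ℕ)/n), dsM2_lt _ (hd x) _ (hd y)⟩, ?_⟩
    exact dsBlowup 5 4 n hn1 dsM2 (fun i j hi hj => dsM2_prop i hi j hj) _ (fun x y => rfl)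
  · -- k ≥ 3 : the general construction
    have hd : ∀ x : Fin ((3*k-1)*n), (x : ℕ)/n < 3*k-1 :=
      fun x => (Nat.div_lt_iff_lt_mul hn0).mpr x.isLt
    refine ⟨fun x y => ⟨dsM k ((x : ℕ)/n) ((y : ℕ)/n),
      dsM_lt k _ _ hk3 (hd x) (hd y)⟩, ?_⟩
    exact dsBlowup (3*k-1) (2*k) n hn1 (dsM k)
      (fun i j hi hj => dsM_prop k i j hk3 hi hj) _ (fun x y => rfl)
end

section
/- Let t ≥ s > n ≥ 2 be integers and let G be the complete bipartite graph with parts X and Y of sizes t and s respectively. If s - ⌊sn/t⌋ ≤ n, then there is a coloring of the edges of G with colors {1,2} such that every vertex of X is incident to at most n edges of color 1 and every vertex of Y is incident to at most n edges of color 2. -/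
/-- Lemma: for `t ≥ s > n ≥ 2` with `s - ⌊sn/t⌋ ≤ n`, the complete bipartite graph
with parts of sizes `t` and `s` has a `2`-coloring (colors `0` and `1` standing for
colors `1` and `2`) in which every vertex of `X` is on at most `n` edges of the first
color and every vertex of `Y` is on at most `n` edges of the second color. -/
theorem stmt8 (t s n : ℕ) (hts : s ≤ t) (hsn : n < s) (hn : 2 ≤ n)
    (hfloor : s - s * n / t ≤ n) :
    ∃ c : Fin t → Fin s → Fin 2,
      (∀ x : Fin t, (Finset.univ.filter (fun y => c x y = 0)).card ≤ n) ∧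
      (∀ y : Fin s, (Finset.univ.filter (fun x => c x y = 1)).card ≤ n) := by
  have hs0 : 0 < s := by omega
  have hn0 : 0 < n := by omega
  have ht0 : 0 < t := by omega
  refine ⟨fun x y => if ((y : ℕ) + (s - (x : ℕ) * n % s)) % s < n then 0 else 1, ?_, ?_⟩
  · -- row bound
    intro x
    show (Finset.univ.filter (fun y : Fin s =>
        (if ((y : ℕ) + (s - (x : ℕ) * n % s)) % s < n then (0:Fin 2) else 1) = 0)).card ≤ n
    have hsub : (Finset.univ.filter (fun y : Fin s =>
        (if ((y : ℕ) + (s - (x : ℕ) * n % s)) % s < n then (0:Fin 2) else 1) = 0)).card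
        ≤ (Finset.range n).card := by
      apply Finset.card_le_card_of_injOn
        (fun y : Fin s => ((y : ℕ) + (s - (x : ℕ) * n % s)) % s)
      · intro y hy
        simp only [Finset.mem_coe, Finset.mem_filter] at hy
        rw [Finset.mem_coe, Finset.mem_range]
        by_contra h
        rw [if_neg h] at hy
        exact absurd hy.2 (by decide)
      · intro a _ b _ hab
        have h1 : (a : ℕ) % s = (b : ℕ) % s :=
          Nat.ModEq.add_right_cancel' _ hab
        apply Fin.ext
        rwa [Nat.mod_eq_of_lt a.isLt, Nat.mod_eq_of_lt b.isLt] at h1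
    simpa using hsub
  · -- column bound
    intro y
    show (Finset.univ.filter (fun x : Fin t =>
        (if ((y : ℕ) + (s - (x : ℕ) * n % s)) % s < n then (0:Fin 2) else 1) = 1)).card ≤ n
    have hkey : (t - n) * s ≤ t * n := by
      have h0 : s - n ≤ s * n / t := by omega
      have h1 : (s - n) * t ≤ s * n / t * t := Nat.mul_le_mul_right t h0
      have h3 : (s - n) * t ≤ s * n := le_trans h1 (Nat.div_mul_le_self _ _)
      rw [Nat.sub_mul] at h3
      have h4 : s * t ≤ s * n + n * t := Nat.sub_le_iff_le_add.mp h3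
      rw [Nat.sub_mul]
      apply Nat.sub_le_iff_le_add.mpr
      calc t * s = s * t := mul_comm _ _
        _ ≤ s * n + n * t := h4
        _ = t * n + n * s := by ring
    have hlt : ∀ m, m < t - n → (y : ℕ) + m * s < t * n := by
      intro m hm
      have hms : (m + 1) * s ≤ (t - n) * s := Nat.mul_le_mul_right s hm
      have hy := y.isLt
      calc (y : ℕ) + m * s < s + m * s := by omega
        _ = (m + 1) * s := by ring
        _ ≤ (t - n) * s := hms
        _ ≤ t * n := hkey
    -- the key modular computation
    have main : ∀ q j : ℕ, j < n → (y : ℕ) % s = (q * n + j) % s →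
        ((y : ℕ) + (s - q * n % s)) % s < n := by
      intro q j hj hmodeq
      have hrs : q * n % s < s := Nat.mod_lt _ hs0
      have hy3 : (y : ℕ) = (q * n % s + j) % s := by
        conv_lhs => rw [← Nat.mod_eq_of_lt y.isLt]
        rw [hmodeq, Nat.add_mod, Nat.mod_eq_of_lt (show j < s by omega)]
      rcases Nat.lt_or_ge (q * n % s + j) s with hcase | hcase
      · have hy4 : (y : ℕ) = q * n % s + j := by rw [hy3, Nat.mod_eq_of_lt hcase]
        have heq : (y : ℕ) + (s - q * n % s) = s + j := by omega
        rw [heq, Nat.add_mod_left, Nat.mod_eq_of_lt (show j < s by omega)]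
        exact hj
      · have h5 : (q * n % s + j) % s = q * n % s + j - s := by
          rw [Nat.mod_eq_sub_mod hcase, Nat.mod_eq_of_lt (by omega)]
        have hy4 : (y : ℕ) = q * n % s + j - s := by rw [hy3, h5]
        have heq : (y : ℕ) + (s - q * n % s) = j := by omega
        rw [heq, Nat.mod_eq_of_lt (show j < s by omega)]
        exact hj
    have key : t - n ≤ (Finset.univ.filter (fun x : Fin t =>
        (if ((y : ℕ) + (s - (x : ℕ) * n % s)) % s < n then (0:Fin 2) else 1) = 0)).card := by
      have hcard := Finset.card_le_card_of_injOn
        (f := fun m : ℕ => (⟨((y : ℕ) + m * s) / n % t, Nat.mod_lt _ ht0⟩ : Fin t))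
        (s := Finset.range (t - n))
        (t := Finset.univ.filter (fun x : Fin t =>
          (if ((y : ℕ) + (s - (x : ℕ) * n % s)) % s < n then (0:Fin 2) else 1) = 0))
        ?_ ?_
      · simpa using hcard
      · -- membership
        intro m hm
        rw [Finset.mem_coe, Finset.mem_range] at hm
        have hk := hlt m hm
        have hdiv : ((y : ℕ) + m * s) / n < t :=
          Nat.div_lt_of_lt_mul (by rw [mul_comm n t]; exact hk)
        have hmod : ((y : ℕ) + m * s) / n % t = ((y : ℕ) + m * s) / n :=
          Nat.mod_eq_of_lt hdiv
        simp only [Finset.mem_coe, Finset.mem_filter, Finset.mem_univ, true_and]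
        have hmodeq : (y : ℕ) % s = (((y : ℕ) + m * s) / n * n + ((y : ℕ) + m * s) % n) % s := by
          rw [show ((y : ℕ) + m * s) / n * n + ((y : ℕ) + m * s) % n = (y : ℕ) + m * s from by
            rw [mul_comm]; exact Nat.div_add_mod _ _]
          rw [Nat.add_mul_mod_self_right]
        have hcond := main (((y : ℕ) + m * s) / n) (((y : ℕ) + m * s) % n)
          (Nat.mod_lt _ hn0) hmodeq
        refine if_pos ?_
        rw [hmod]
        exact hcond
      · -- injectivity
        intro a ha b hb hab
        simp only [Finset.coe_range, Set.mem_Iio] at ha hb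
        have hda : ((y : ℕ) + a * s) / n < t :=
          Nat.div_lt_of_lt_mul (by rw [mul_comm n t]; exact hlt a ha)
        have hdb : ((y : ℕ) + b * s) / n < t :=
          Nat.div_lt_of_lt_mul (by rw [mul_comm n t]; exact hlt b hb)
        have hv : ((y : ℕ) + a * s) / n = ((y : ℕ) + b * s) / n := by
          have h := congrArg Fin.val hab
          simpa [Nat.mod_eq_of_lt hda, Nat.mod_eq_of_lt hdb] using h
        have step : ∀ u v : ℕ, u / n = v / n → u < v + n := by
          intro u v h
          have e1 := Nat.div_add_mod u n
          have e2 := Nat.div_add_mod v n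
          rw [h] at e1
          have m1 := Nat.mod_lt u hn0
          have m2 := Nat.mod_lt v hn0
          generalize n * (v / n) = A at e1 e2
          generalize u % n = p at e1 m1
          generalize v % n = q at e2 m2
          omega
        have s1 := step _ _ hv
        have s2 := step _ _ hv.symm
        by_contra hne
        rcases Nat.lt_or_ge a b with h | h
        · have hab2 : (a + 1) * s ≤ b * s := Nat.mul_le_mul_right s h
          rw [Nat.add_mul, one_mul] at hab2
          generalize a * s = A at s1 s2 hab2
          generalize b * s = B at s1 s2 hab2
          omega
        · have h' : b < a := by omega
          have hab2 : (b + 1) * s ≤ a * s := Nat.mul_le_mul_right s h'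
          rw [Nat.add_mul, one_mul] at hab2
          generalize a * s = A at s1 s2 hab2
          generalize b * s = B at s1 s2 hab2
          omega
    have hsplit := Finset.card_filter_add_card_filter_not
      (s := (Finset.univ : Finset (Fin t)))
      (p := fun x : Fin t =>
        (if ((y : ℕ) + (s - (x : ℕ) * n % s)) % s < n then (0:Fin 2) else 1) = 0)
    have hiff : ∀ x : Fin t,
        ((if ((y : ℕ) + (s - (x : ℕ) * n % s)) % s < n then (0:Fin 2) else 1) = 1) ↔
        ¬ ((if ((y : ℕ) + (s - (x : ℕ) * n % s)) % s < n then (0:Fin 2) else 1) = 0) := by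
      intro x
      by_cases h : ((y : ℕ) + (s - (x : ℕ) * n % s)) % s < n <;> simp [h]
    have hfe : Finset.univ.filter (fun x : Fin t =>
        (if ((y : ℕ) + (s - (x : ℕ) * n % s)) % s < n then (0:Fin 2) else 1) = 1)
        = Finset.univ.filter (fun x : Fin t =>
        ¬ ((if ((y : ℕ) + (s - (x : ℕ) * n % s)) % s < n then (0:Fin 2) else 1) = 0)) :=
      Finset.filter_congr (fun x _ => hiff x)
    rw [hfe]
    have hcardt : (Finset.univ : Finset (Fin t)).card = t := by simp
    omega
end

section
/- Let n ≥ 1 and let G be a simple graph on N ≥ 2n+2 vertices. Let L(G) = {v : deg(v) ≥ 2n+1} and S(G) = {v : deg(v) ≤ n}. If L(G) is nonempty, then either G contains a copy of the double star S_{n1,n2} for every pair of integers n1, n2 ≥ 1 with n1 + n2 = 2n, or the sum of the degrees of the vertices in L(G) equals the number of edges of G with one endpoint in L(G) and the other endpoint in S(G) (in particular, S(G) is nonempty). -/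
lemma GraphHasDoubleStar.swap {V : Type*} {G : SimpleGraph V} {k l : ℕ}
    (h : GraphHasDoubleStar G k l) : GraphHasDoubleStar G l k := by
  obtain ⟨u, v, a, b, h1, h2, h3, h4, h5, h6, h7, h8, h9⟩ := h
  exact ⟨v, u, b, a, h1.symm, h3, h2, fun j => ⟨(h5 j).2, (h5 j).1⟩,
    fun i => ⟨(h4 i).2, (h4 i).1⟩, fun j i => (h6 i j).symm, h7.symm, h9, h8⟩

lemma key_ds {V : Type*} [Fintype V] [DecidableEq V] (G : SimpleGraph V) [DecidableRel G.Adj]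
    {u v : V} (huv : G.Adj u v) {n1 n2 : ℕ}
    (hu : n1 + n2 + 1 ≤ G.degree u) (hv : n2 + 1 ≤ G.degree v) :
    GraphHasDoubleStar G n1 n2 := by
  have hvdeg : (G.neighborFinset v).card = G.degree v := G.card_neighborFinset_eq_degree v
  have hudeg : (G.neighborFinset u).card = G.degree u := G.card_neighborFinset_eq_degree u
  have hB0 : n2 ≤ ((G.neighborFinset v).erase u).card := by
    rw [Finset.card_erase_of_mem (by simp [huv.symm]), hvdeg]
    omega
  obtain ⟨B, hBsub, hBcard⟩ := Finset.exists_subset_card_eq hB0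
  have hA0 : n1 ≤ ((G.neighborFinset u) \ (insert v B)).card := by
    have h1 : (G.neighborFinset u).card - (insert v B).card
        ≤ ((G.neighborFinset u) \ (insert v B)).card := Finset.le_card_sdiff _ _
    have h2 : (insert v B).card ≤ n2 + 1 := by
      calc (insert v B).card ≤ B.card + 1 := Finset.card_insert_le _ _
        _ = n2 + 1 := by rw [hBcard]
    omega
  obtain ⟨A, hAsub, hAcard⟩ := Finset.exists_subset_card_eq hA0
  set ea : Fin n1 → A := fun i => A.equivFin.symm (Fin.cast hAcard.symm i) with hea
  set eb : Fin n2 → B := fun j => B.equivFin.symm (Fin.cast hBcard.symm j) with heb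
  set a : Fin n1 → V := fun i => (ea i : V) with ha
  set b : Fin n2 → V := fun j => (eb j : V) with hb
  have haA : ∀ i, a i ∈ A := fun i => (ea i).2
  have hbB : ∀ j, b j ∈ B := fun j => (eb j).2
  have hea_inj : Function.Injective ea :=
    A.equivFin.symm.injective.comp (Fin.cast_injective _)
  have heb_inj : Function.Injective eb :=
    B.equivFin.symm.injective.comp (Fin.cast_injective _)
  have hadj_a : ∀ i, G.Adj u (a i) := by
    intro i
    have := hAsub (haA i)
    rw [Finset.mem_sdiff, SimpleGraph.mem_neighborFinset] at this
    exact this.1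
  have hadj_b : ∀ j, G.Adj v (b j) := by
    intro j
    have := hBsub (hbB j)
    rw [Finset.mem_erase, SimpleGraph.mem_neighborFinset] at this
    exact this.2
  have hanotins : ∀ i, a i ∉ insert v B := by
    intro i
    have := hAsub (haA i)
    rw [Finset.mem_sdiff] at this
    exact this.2
  refine ⟨u, v, a, b, huv.ne, ?_, ?_, ?_, ?_, ?_, huv, hadj_a, hadj_b⟩
  · intro i j hij
    exact hea_inj (Subtype.ext hij)
  · intro i j hij
    exact heb_inj (Subtype.ext hij)
  · intro i
    refine ⟨fun h => (hadj_a i).ne (h ▸ rfl), fun h => hanotins i (h ▸ Finset.mem_insert_self v B)⟩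
  · intro j
    refine ⟨?_, fun h => (hadj_b j).ne (h ▸ rfl)⟩
    have := hBsub (hbB j)
    rw [Finset.mem_erase] at this
    exact this.1
  · intro i j h
    exact hanotins i (h ▸ Finset.mem_insert_of_mem (hbB j))

/-- With `L(G) = {v : deg v ≥ 2n+1}` and `S(G) = {v : deg v ≤ n}`: if `L(G) ≠ ∅`,
then either `G` contains every double star on `2n+2` vertices, or
`∑_{v ∈ L(G)} deg v = e(L(G), S(G))` (in particular `S(G) ≠ ∅`). -/
theorem stmt9 {V : Type*} [Fintype V] [DecidableEq V] (n : ℕ) (hn : 1 ≤ n)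
    (G : SimpleGraph V) [DecidableRel G.Adj] (hV : 2*n+2 ≤ Fintype.card V)
    (hL : (Finset.univ.filter (fun v => 2*n+1 ≤ G.degree v)).Nonempty) :
    (∀ n1 n2 : ℕ, 1 ≤ n1 → 1 ≤ n2 → n1 + n2 = 2*n → GraphHasDoubleStar G n1 n2) ∨
    ((∑ v ∈ Finset.univ.filter (fun v => 2*n+1 ≤ G.degree v), G.degree v) =
       (∑ v ∈ Finset.univ.filter (fun v => 2*n+1 ≤ G.degree v),
         (Finset.univ.filter (fun w => G.degree w ≤ n ∧ G.Adj v w)).card) ∧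
     (Finset.univ.filter (fun v => G.degree v ≤ n)).Nonempty) := by
  by_cases h : ∀ n1 n2 : ℕ, 1 ≤ n1 → 1 ≤ n2 → n1 + n2 = 2*n → GraphHasDoubleStar G n1 n2
  · exact Or.inl h
  right
  push_neg at h
  obtain ⟨n1, n2, h1, h2, hsum, hns⟩ := h
  have claim : ∀ v, 2*n+1 ≤ G.degree v → ∀ w, G.Adj v w → G.degree w ≤ n := by
    intro v hv w hvw
    by_contra hw
    push_neg at hw
    rcases le_or_gt n2 n with hle | hlt
    · exact hns (key_ds G hvw (by omega) (by omega))
    · exact hns (GraphHasDoubleStar.swap (key_ds G hvw (by omega) (by omega)))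
  constructor
  · apply Finset.sum_congr rfl
    intro v hv
    rw [Finset.mem_filter] at hv
    have : G.neighborFinset v = Finset.univ.filter (fun w => G.degree w ≤ n ∧ G.Adj v w) := by
      ext w
      simp only [SimpleGraph.mem_neighborFinset, Finset.mem_filter, Finset.mem_univ, true_and]
      exact ⟨fun hw => ⟨claim v hv.2 w hw, hw⟩, fun hw => hw.2⟩
    rw [← G.card_neighborFinset_eq_degree v, this]
  · obtain ⟨v, hv⟩ := hL
    rw [Finset.mem_filter] at hv
    have hpos : 0 < (G.neighborFinset v).card := by
      rw [G.card_neighborFinset_eq_degree v]; omega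
    obtain ⟨w, hw⟩ := Finset.card_pos.mp hpos
    rw [SimpleGraph.mem_neighborFinset] at hw
    exact ⟨w, Finset.mem_filter.mpr ⟨Finset.mem_univ w, claim v hv.2 w hw⟩⟩
end

section
/- Let r ≥ 2 and n ≥ 1 be integers and let N ≥ (2r-1)n + 2. In every r-coloring of the edges of the complete graph on N vertices, either (i) for every pair of integers n1, n2 ≥ 1 with n1 + n2 = 2n there is a monochromatic copy of the double star S_{n1,n2}, or (ii) for every vertex v and every color i, the number of edges of color i incident to v is at least n+1 and at most 2n. -/
/-- The degree of vertex `v` in color `i`. -/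
def deg {N r : ℕ} (c : Fin N → Fin N → Fin r) (v : Fin N) (i : Fin r) : ℕ :=
  (Finset.univ.filter (fun u => u ≠ v ∧ c v u = i)).card

lemma sum_deg {N r : ℕ} (c : Fin N → Fin N → Fin r) (x : Fin N) :
    ∑ m : Fin r, deg c x m = N - 1 := by
  have H : ∀ y ∈ Finset.univ.filter (fun u => u ≠ x), c x y ∈ (Finset.univ : Finset (Fin r)) :=
    fun y _ => Finset.mem_univ _
  have h := Finset.card_eq_sum_card_fiberwise (f := fun u => c x u) H
  have h2 : (Finset.univ.filter (fun u : Fin N => u ≠ x)).card = N - 1 := by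
    rw [Finset.filter_ne', Finset.card_erase_of_mem (Finset.mem_univ _), Finset.card_univ,
      Fintype.card_fin]
  rw [h2] at h
  rw [h]
  apply Finset.sum_congr rfl
  intro m _
  unfold deg
  simp only [Finset.filter_filter]

lemma keyid {r n : ℕ} (hr : 1 ≤ r) : n + (r - 1) * (2 * n) = (2 * r - 1) * n := by
  obtain ⟨R, rfl⟩ : ∃ R, r = R + 1 := ⟨r - 1, by omega⟩
  have h1 : R + 1 - 1 = R := by omega
  have h2 : 2 * (R + 1) - 1 = 2 * R + 1 := by omega
  rw [h1, h2]; ring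

/-- If some color degree at `x` is at most `n`, then some color degree at `x` is huge. -/
lemma exists_big {N r n : ℕ} (hr : 2 ≤ r) (hN : (2*r-1)*n + 2 ≤ N)
    (c : Fin N → Fin N → Fin r) (x : Fin N) (m0 : Fin r) (h0 : deg c x m0 ≤ n) :
    ∃ m, 2*n+1 ≤ deg c x m := by
  by_contra h
  push_neg at h
  have hsum : ∑ m, deg c x m = N - 1 := sum_deg c x
  have hbound : ∑ m ∈ Finset.univ.erase m0, deg c x m ≤ (r - 1) * (2*n) := by
    have h' := Finset.sum_le_card_nsmul (Finset.univ.erase m0) (deg c x) (2*n)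
      (fun m _ => by have := h m; omega)
    have hcard : (Finset.univ.erase m0).card = r - 1 := by
      rw [Finset.card_erase_of_mem (Finset.mem_univ _), Finset.card_univ, Fintype.card_fin]
    rwa [hcard, smul_eq_mul] at h'
  have hle : ∑ m, deg c x m ≤ n + (r - 1) * (2*n) := by
    rw [← Finset.sum_erase_add _ _ (Finset.mem_univ m0)]
    calc ∑ m ∈ Finset.univ.erase m0, deg c x m + deg c x m0
        ≤ (r - 1) * (2*n) + n := Nat.add_le_add hbound h0
      _ = n + (r - 1) * (2*n) := Nat.add_comm _ _
  rw [keyid (by omega), hsum] at hle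
  obtain ⟨X, hX⟩ : ∃ X, X = (2*r-1)*n := ⟨_, rfl⟩
  rw [← hX] at hle hN
  clear hX
  omega

/-- Out-degree into "big" colors at `y`. -/
def OUT (n : ℕ) {N r : ℕ} (c : Fin N → Fin N → Fin r) (y : Fin N) : ℕ :=
  (Finset.univ.filter (fun x => x ≠ y ∧ 2*n+1 ≤ deg c y (c y x))).card

/-- In-degree from "big" vertices at `x`. -/
def IN (n : ℕ) {N r : ℕ} (c : Fin N → Fin N → Fin r) (x : Fin N) : ℕ :=
  (Finset.univ.filter (fun y => y ≠ x ∧ 2*n+1 ≤ deg c y (c y x))).card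

lemma master (n : ℕ) {N r : ℕ} (c : Fin N → Fin N → Fin r) :
    ∑ y, OUT n c y = ∑ x, IN n c x := by
  unfold OUT IN
  simp only [Finset.card_filter]
  rw [Finset.sum_comm]
  apply Finset.sum_congr rfl
  intro x _
  apply Finset.sum_congr rfl
  intro y _
  by_cases h : x ≠ y ∧ 2*n+1 ≤ deg c y (c y x)
  · rw [if_pos h, if_pos ⟨Ne.symm h.1, h.2⟩]
  · rw [if_neg h, if_neg (fun h' => h ⟨Ne.symm h'.1, h'.2⟩)]

/-- Fiber of IN by the color of the connecting edge. -/
def Fib (n : ℕ) {N r : ℕ} (c : Fin N → Fin N → Fin r) (x : Fin N) (m : Fin r) : ℕ :=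
  (Finset.univ.filter (fun y => (y ≠ x ∧ 2*n+1 ≤ deg c y (c y x)) ∧ c y x = m)).card

lemma IN_eq (n : ℕ) {N r : ℕ} (c : Fin N → Fin N → Fin r) (x : Fin N) :
    IN n c x = ∑ m, Fib n c x m := by
  unfold IN Fib
  rw [Finset.card_eq_sum_card_fiberwise (f := fun y => c y x) (t := Finset.univ)
    (fun y _ => Finset.mem_univ _)]
  apply Finset.sum_congr rfl
  intro m _
  simp only [Finset.filter_filter]

lemma OUT_eq (n : ℕ) {N r : ℕ} (c : Fin N → Fin N → Fin r) (x : Fin N) :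
    OUT n c x = ∑ m ∈ Finset.univ.filter (fun m => 2*n+1 ≤ deg c x m), deg c x m := by
  unfold OUT
  rw [Finset.card_eq_sum_card_fiberwise (f := fun z => c x z)
    (t := Finset.univ.filter (fun m => 2*n+1 ≤ deg c x m))
    (fun z hz => by
      simp only [Finset.mem_filter, Finset.mem_univ, true_and] at ⊢
      exact Finset.mem_coe.mpr (Finset.mem_filter.mpr ⟨Finset.mem_univ _, (Finset.mem_filter.mp hz).2.2⟩))]
  apply Finset.sum_congr rfl
  intro m hm
  simp only [Finset.mem_filter, Finset.mem_univ, true_and] at hm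
  rw [Finset.filter_filter]
  unfold deg
  congr 1
  apply Finset.filter_congr
  intro z _
  constructor
  · rintro ⟨⟨h1, _⟩, h3⟩; exact ⟨h1, h3⟩
  · rintro ⟨h1, h3⟩; exact ⟨⟨h1, h3 ▸ hm⟩, h3⟩

/-- The counting contradiction: if there is a big pair but no "winning" edge, False. -/
lemma counting {N r n : ℕ} (hr : 2 ≤ r) (hn : 1 ≤ n) (hN : (2*r-1)*n + 2 ≤ N)
    (c : Fin N → Fin N → Fin r) (hsymm : ∀ u v, c u v = c v u)
    (noWIN : ∀ y x m, y ≠ x → c y x = m → 2*n+1 ≤ deg c y m → deg c x m ≤ n)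
    (v : Fin N) (i : Fin r) (hbig : 2*n+1 ≤ deg c v i) : False := by
  have hFib_le : ∀ (x : Fin N) (m : Fin r), Fib n c x m ≤ deg c x m := by
    intro x m
    apply Finset.card_le_card
    intro y hy
    have hy' := (Finset.mem_filter.mp hy).2
    simp only [Fib, deg, Finset.mem_filter, Finset.mem_univ, true_and] at ⊢
    exact ⟨hy'.1.1, by rw [hsymm x y]; exact hy'.2⟩
  have hFib_small : ∀ (x : Fin N) (m : Fin r), Fib n c x m ≠ 0 → deg c x m ≤ n := by
    intro x m hne
    obtain ⟨y, hy⟩ := Finset.card_ne_zero.mp hne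
    simp only [Finset.mem_filter, Finset.mem_univ, true_and] at hy
    exact noWIN y x m hy.1.1 hy.2 (hy.2 ▸ hy.1.2)
  have hScase : ∀ x : Fin N, (∃ m0, 2*n+1 ≤ deg c x m0) → IN n c x + n + 1 ≤ OUT n c x := by
    intro x hx
    obtain ⟨m0, hm0⟩ := hx
    have hzero : ∑ m ∈ Finset.univ.filter (fun m => 2*n+1 ≤ deg c x m), Fib n c x m = 0 := by
      apply Finset.sum_eq_zero
      intro m hm
      simp only [Finset.mem_filter, Finset.mem_univ, true_and] at hm
      by_contra hne
      have := hFib_small x m hne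
      omega
    have hFibsplit := Finset.sum_filter_add_sum_filter_not Finset.univ
      (fun m => 2*n+1 ≤ deg c x m) (Fib n c x)
    have hINeq := IN_eq n c x
    have hdegsplit := Finset.sum_filter_add_sum_filter_not Finset.univ
      (fun m => 2*n+1 ≤ deg c x m) (deg c x)
    have hsum := sum_deg c x
    have hOUT := OUT_eq n c x
    have hm0mem : m0 ∈ Finset.univ.filter (fun m => 2*n+1 ≤ deg c x m) := by
      simp only [Finset.mem_filter, Finset.mem_univ, true_and]
      exact hm0
    have hBcard : 1 ≤ (Finset.univ.filter (fun m => 2*n+1 ≤ deg c x m)).card :=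
      Finset.card_pos.mpr ⟨m0, hm0mem⟩
    have hcards := Finset.card_filter_add_card_filter_not
      (s := (Finset.univ : Finset (Fin r))) (p := fun m => 2*n+1 ≤ deg c x m)
    rw [Finset.card_univ, Fintype.card_fin] at hcards
    have hcompbound : ∑ m ∈ Finset.univ.filter (fun m => ¬ 2*n+1 ≤ deg c x m), Fib n c x m
        + ∑ m ∈ Finset.univ.filter (fun m => ¬ 2*n+1 ≤ deg c x m), deg c x m
        ≤ (r - 1) * (2*n) := by
      rw [← Finset.sum_add_distrib]
      have h1 := Finset.sum_le_card_nsmul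
        (Finset.univ.filter (fun m => ¬ 2*n+1 ≤ deg c x m))
        (fun m => Fib n c x m + deg c x m) (2*n)
        (fun m hm => by
          simp only [Finset.mem_filter, Finset.mem_univ, true_and] at hm
          show Fib n c x m + deg c x m ≤ 2*n
          by_cases hz : Fib n c x m = 0
          · omega
          · have ha := hFib_small x m hz
            have hb := hFib_le x m
            omega)
      rw [smul_eq_mul] at h1
      refine le_trans h1 (Nat.mul_le_mul_right _ ?_)
      omega
    have hkey : n + (r - 1) * (2 * n) = (2 * r - 1) * n := keyid (by omega)
    obtain ⟨X, hX⟩ : ∃ X, X = (2*r-1)*n := ⟨_, rfl⟩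
    obtain ⟨K, hK⟩ : ∃ K, K = (r-1)*(2*n) := ⟨_, rfl⟩
    rw [← hX] at hN
    rw [← hX, ← hK] at hkey
    rw [← hK] at hcompbound
    clear hX hK
    omega
  have hTcase : ∀ x : Fin N, ¬ (∃ m0, 2*n+1 ≤ deg c x m0) → IN n c x = 0 := by
    intro x hx
    by_contra hne
    rw [IN_eq] at hne
    obtain ⟨m, -, hm⟩ := Finset.exists_ne_zero_of_sum_ne_zero hne
    exact hx (exists_big hr hN c x m (hFib_small x m hm))
  have hall : ∀ x : Fin N, IN n c x ≤ OUT n c x := by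
    intro x
    by_cases hx : ∃ m0, 2*n+1 ≤ deg c x m0
    · have := hScase x hx; omega
    · have := hTcase x hx; omega
  have hstrict : IN n c v < OUT n c v := by
    have := hScase v ⟨i, hbig⟩; omega
  have hlt : ∑ x, IN n c x < ∑ y, OUT n c y :=
    Finset.sum_lt_sum (fun x _ => hall x) ⟨v, Finset.mem_univ v, hstrict⟩
  rw [master] at hlt
  exact lt_irrefl _ hlt

/-- Build a double star from an edge with suitable degrees. -/
lemma build {N r : ℕ} (c : Fin N → Fin N → Fin r) (k l : ℕ) (u v : Fin N) (m : Fin r)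
    (huv : u ≠ v) (hcuv : c u v = m) (hu : k + 1 ≤ deg c u m) (hv : k + l + 1 ≤ deg c v m) :
    HasMonoDoubleStar N r k l c := by
  classical
  set Au := Finset.univ.filter (fun z => z ≠ u ∧ c u z = m) with hAu
  set Av := Finset.univ.filter (fun z => z ≠ v ∧ c v z = m) with hAv
  have hAuc : k ≤ (Au.erase v).card := by
    have h1 : Au.card - 1 ≤ (Au.erase v).card := by
      by_cases hv' : v ∈ Au
      · rw [Finset.card_erase_of_mem hv']
      · rw [Finset.erase_eq_of_notMem hv']; omega
    have h2 : k + 1 ≤ Au.card := hu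
    omega
  obtain ⟨A, hA_sub, hA_card⟩ := Finset.exists_subset_card_eq hAuc
  have hBc : l ≤ ((Av.erase u) \ A).card := by
    have h1 : (Av.erase u).card - A.card ≤ ((Av.erase u) \ A).card := Finset.le_card_sdiff A _
    have h2 : Av.card - 1 ≤ (Av.erase u).card := by
      by_cases hu' : u ∈ Av
      · rw [Finset.card_erase_of_mem hu']
      · rw [Finset.erase_eq_of_notMem hu']; omega
    have h3 : k + l + 1 ≤ Av.card := hv
    omega
  obtain ⟨B, hB_sub, hB_card⟩ := Finset.exists_subset_card_eq hBc
  let ea := A.orderIsoOfFin hA_card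
  let eb := B.orderIsoOfFin hB_card
  have hAmem : ∀ i0 : Fin k, ((ea i0 : Fin N) ≠ u ∧ (ea i0 : Fin N) ≠ v) ∧ c u (ea i0) = m := by
    intro i0
    have h1 : (ea i0 : Fin N) ∈ Au.erase v := hA_sub (ea i0).2
    rw [Finset.mem_erase, hAu, Finset.mem_filter] at h1
    exact ⟨⟨h1.2.2.1, h1.1⟩, h1.2.2.2⟩
  have hBmem : ∀ j0 : Fin l, (((eb j0 : Fin N) ≠ u ∧ (eb j0 : Fin N) ≠ v) ∧ c v (eb j0) = m)
      ∧ (eb j0 : Fin N) ∉ A := by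
    intro j0
    have h1 : (eb j0 : Fin N) ∈ (Av.erase u) \ A := hB_sub (eb j0).2
    rw [Finset.mem_sdiff, Finset.mem_erase, hAv, Finset.mem_filter] at h1
    exact ⟨⟨⟨h1.1.1, h1.1.2.2.1⟩, h1.1.2.2.2⟩, h1.2⟩
  refine ⟨u, v, fun i0 => (ea i0 : Fin N), fun j0 => (eb j0 : Fin N), m, huv, ?_, ?_, ?_, ?_, ?_,
    hcuv, ?_, ?_⟩
  · intro i1 i2 h
    have h' : (ea i1 : Fin N) = (ea i2 : Fin N) := h
    exact ea.injective (Subtype.ext h')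
  · intro j1 j2 h
    have h' : (eb j1 : Fin N) = (eb j2 : Fin N) := h
    exact eb.injective (Subtype.ext h')
  · exact fun i0 => (hAmem i0).1
  · exact fun j0 => ((hBmem j0).1).1
  · intro i0 j0 h
    have h' : (ea i0 : Fin N) = (eb j0 : Fin N) := h
    exact (hBmem j0).2 (h' ▸ (ea i0).2)
  · exact fun i0 => (hAmem i0).2
  · exact fun j0 => ((hBmem j0).1).2

/-- Swap the two centers of a double star. -/
lemma swapStar {N r k l : ℕ} {c : Fin N → Fin N → Fin r} (hsymm : ∀ u v, c u v = c v u)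
    (h : HasMonoDoubleStar N r k l c) : HasMonoDoubleStar N r l k c := by
  obtain ⟨u, v, a, b, col, h1, h2, h3, h4, h5, h6, h7, h8, h9⟩ := h
  exact ⟨v, u, b, a, col, h1.symm, h3, h2, fun j => ⟨(h5 j).2, (h5 j).1⟩,
    fun i => ⟨(h4 i).2, (h4 i).1⟩, fun j i => (h6 i j).symm, (hsymm v u).trans h7,
    h9, h8⟩

/-- For `N ≥ (2r-1)n + 2`, in any `r`-coloring of `K_N` either there is a
monochromatic copy of every double star on `2n+2` vertices, or every vertex has
degree at least `n+1` and at most `2n` in every color. -/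
theorem stmt10 (r n N : ℕ) (hr : 2 ≤ r) (hn : 1 ≤ n) (hN : (2*r-1)*n + 2 ≤ N)
    (c : Fin N → Fin N → Fin r) (hsymm : ∀ u v, c u v = c v u) :
    (∀ n1 n2 : ℕ, 1 ≤ n1 → 1 ≤ n2 → n1 + n2 = 2*n → HasMonoDoubleStar N r n1 n2 c) ∨
    (∀ v : Fin N, ∀ i : Fin r,
      n + 1 ≤ (Finset.univ.filter (fun u => u ≠ v ∧ c v u = i)).card ∧
      (Finset.univ.filter (fun u => u ≠ v ∧ c v u = i)).card ≤ 2*n) := by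
  by_cases hii : ∀ v : Fin N, ∀ i : Fin r, n + 1 ≤ deg c v i ∧ deg c v i ≤ 2*n
  · exact Or.inr hii
  left
  push_neg at hii
  obtain ⟨v0, i0, hbad⟩ := hii
  have hbigpair : ∃ v i, 2*n+1 ≤ deg c v i := by
    rcases le_or_gt (deg c v0 i0) n with h | h
    · obtain ⟨m, hm⟩ := exists_big hr hN c v0 i0 h
      exact ⟨v0, m, hm⟩
    · exact ⟨v0, i0, hbad h⟩
  obtain ⟨v, i, hvbig⟩ := hbigpair
  have hwin : ∃ x y m, x ≠ y ∧ c x y = m ∧ n + 1 ≤ deg c x m ∧ 2*n + 1 ≤ deg c y m := by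
    by_contra hno
    push_neg at hno
    refine counting hr hn hN c hsymm ?_ v i hvbig
    intro y x m hyx hcyx hbigy
    by_contra hx
    push_neg at hx
    have := hno x y m hyx.symm (by rw [hsymm x y]; exact hcyx) hx
    omega
  obtain ⟨x, y, m, hxy, hcxy, hxdeg, hybig⟩ := hwin
  intro n1 n2 h1 h2 h12
  rcases le_or_gt n1 n with hn1 | hn1
  · exact build c n1 n2 x y m hxy hcxy (by omega) (by omega)
  · have hn2 : n2 ≤ n := by omega
    exact swapStar hsymm (build c n2 n1 x y m hxy hcxy (by omega) (by omega))
end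

section
/- For all integers r ≥ 1 and n ≥ m ≥ 1, there exists an r-coloring of the edges of the complete bipartite graph K_{rn,rn} in which every vertex is incident to at most n edges of each color; consequently this coloring contains no monochromatic copy of the double star S_{n,m}. (Equivalently, R^bip_r(S_{n,m}) ≥ rn + 1.) -/
lemma key_filter_card (r n : ℕ) (hr : 0 < r) (hn : 0 < n) (k : ℕ) (i : Fin r) :
    (Finset.univ.filter
      (fun y : Fin (r*n) => (k + y.val / n) % r = i.val)).card ≤ n := by
  have hle : (Finset.univ.filter
      (fun y : Fin (r*n) => (k + y.val / n) % r = i.val)).card ≤ (Finset.range n).card := by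
    apply Finset.card_le_card_of_injOn (fun y => y.val % n)
    · intro y _
      exact Finset.mem_range.mpr (Nat.mod_lt _ hn)
    · intro y1 h1 y2 h2 hmod
      simp only [Finset.coe_filter, Set.mem_setOf_eq, Finset.mem_univ, true_and] at h1 h2
      have hd1 : y1.val / n < r := by
        rw [Nat.div_lt_iff_lt_mul hn]
        have := y1.isLt; omega
      have hd2 : y2.val / n < r := by
        rw [Nat.div_lt_iff_lt_mul hn]
        have := y2.isLt; omega
      have hmeq : Nat.ModEq r (k + y1.val / n) (k + y2.val / n) := by
        unfold Nat.ModEq; rw [h1, h2]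
      have hdeq : y1.val / n = y2.val / n := by
        have := (Nat.ModEq.add_left_cancel' k hmeq)
        unfold Nat.ModEq at this
        rwa [Nat.mod_eq_of_lt hd1, Nat.mod_eq_of_lt hd2] at this
      apply Fin.ext
      have e1 := Nat.div_add_mod y1.val n
      have e2 := Nat.div_add_mod y2.val n
      have hmod' : y1.val % n = y2.val % n := hmod
      rw [hdeq, hmod'] at e1
      omega
  simpa using hle

/-- `R^bip_r(S_{n,m}) ≥ rn + 1` for `n ≥ m ≥ 1`: there is an `r`-coloring of
`K_{rn,rn}` in which every vertex is incident to at most `n` edges of every color,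
and consequently there is no monochromatic copy of `S_{n,m}`. -/
theorem stmt17 (r n m : ℕ) (hr : 1 ≤ r) (hm : 1 ≤ m) (hnm : m ≤ n) :
    ∃ c : Fin (r*n) → Fin (r*n) → Fin r,
      (∀ (x : Fin (r*n)) (i : Fin r),
        (Finset.univ.filter (fun y => c x y = i)).card ≤ n) ∧
      (∀ (y : Fin (r*n)) (i : Fin r),
        (Finset.univ.filter (fun x => c x y = i)).card ≤ n) ∧
      ¬ BipHasMonoDoubleStar (r*n) r n m c := by
  have hn : 0 < n := le_trans hm hnm
  refine ⟨fun x y => ⟨(x.val / n + y.val / n) % r, Nat.mod_lt _ hr⟩, ?_, ?_, ?_⟩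
  case refine_1 =>
    intro x i
    have h := key_filter_card r n hr hn (x.val / n) i
    convert h using 2
    ext y
    simp [Fin.ext_iff]
  case refine_2 =>
    intro y i
    have h := key_filter_card r n hr hn (y.val / n) i
    convert h using 2
    ext x
    simp [Fin.ext_iff, Nat.add_comm]
  case refine_3 =>
    intro ⟨u, v, a, b, col, ha, hb, hav, hbu, huv, hua, hbv⟩
    set c : Fin (r*n) → Fin (r*n) → Fin r :=
      fun x y => ⟨(x.val / n + y.val / n) % r, Nat.mod_lt _ hr⟩ with hc
    have hcard : (Finset.univ.filter (fun y => c u y = col)).card ≤ n := by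
      have h := key_filter_card r n hr hn (u.val / n) col
      convert h using 2
      ext y
      simp [hc, Fin.ext_iff]
    have hsub : insert v (Finset.image a Finset.univ) ⊆
        Finset.univ.filter (fun y => c u y = col) := by
      intro y hy
      rcases Finset.mem_insert.mp hy with h | h
      · subst h; simp [huv]
      · obtain ⟨i, _, rfl⟩ := Finset.mem_image.mp h
        simp [hua i]
    have hvnot : v ∉ Finset.image a Finset.univ := by
      intro h
      obtain ⟨i, _, hi⟩ := Finset.mem_image.mp h
      exact hav i hi
    have hbig : n + 1 ≤ (Finset.univ.filter (fun y => c u y = col)).card := by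
      calc n + 1 = (insert v (Finset.image a Finset.univ)).card := by
            rw [Finset.card_insert_of_notMem hvnot, Finset.card_image_of_injective _ ha]
            simp [Nat.add_comm]
        _ ≤ _ := Finset.card_le_card hsub
    omega
end
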